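/- Let Θ_i := (L_i^{+(−1)^{p(i)}} L_{i+1}^{−(−1)^{p(i+1)}} − L_i^{−(−1)^{p(i)}} L_{i+1}^{+(−1)^{p(i+1)}})/(q_i^{+1} − q_i^{−1}) ∈ U_q(gl_n^p) for i ∈ I_{n−1}, and let U_q^int(gl_n^p) be the unital k[q,q^{−1}]-subsuperalgebra of U_q(gl_n^p) generated by {E_i, L_k^{±1}, Θ_i, F_i | i ∈ I_{n−1}, k ∈ I_n}. Then U_q^int(gl_n^p) is a Hopf subsuperalgebra over k[q,q^{−1}] of the Hopf k(q)-superalgebra U_q(gl_n^p): it is closed under the coproduct, counit and antipode of U_q(gl_n^p). -/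

import Mathlib

/-!
Formalization framework for (multiparameter) quantum general linear supergroups,
following Gavarini–Paolini, "Multiparameter Quantum General Linear Supergroup".

We work over `k[[ℏ]] := PowerSeries k` for a field `k` of characteristic zero.
"Super" (ℤ₂-graded) structures are encoded by a family of submodules
`g : ZMod 2 → Submodule S A` (the homogeneous components), and the Koszul-sign
multiplication on `A ⊗ A` is encoded by a bilinear map `m2` together with its
characterizing property on homogeneous pure tensors (`IsSuperMul`).
"Topological" notions (ℏ-adic or I-adic completeness, topological generation,
topological bases) are rendered through the corresponding adic filtrations.
-/

open scoped TensorProduct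
open Finset

noncomputable section

namespace QGLS

/-- The sign `(−1)^a` for a parity `a : ZMod 2`. -/
def sg (S : Type) [Ring S] (a : ZMod 2) : S := if a = 0 then 1 else -1

/-- `p_{i,j} := p(i) + p(j)`. -/
def pp (p : ℕ → ZMod 2) (i j : ℕ) : ZMod 2 := p i + p j

section Generic

variable (S : Type) [CommRing S]

section Alg
variable (A : Type) [Ring A] [Algebra S A]

/-- A ℤ₂-grading (super-structure) on an `S`-algebra `A`, by submodules. -/
structure SuperGrading (g : ZMod 2 → Submodule S A) : Prop where
  one_mem : (1 : A) ∈ g 0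
  mul_mem : ∀ {i j : ZMod 2} {x y : A}, x ∈ g i → y ∈ g j → x * y ∈ g (i + j)
  sup_eq : g 0 ⊔ g 1 = ⊤
  inf_eq : g 0 ⊓ g 1 = ⊥

/-- `m2` is the Koszul-signed ("super") multiplication on `A ⊗[S] A`:
`(a ⊗ b)(c ⊗ d) = (−1)^{|b||c|} (ac ⊗ bd)` on homogeneous elements. -/
def IsSuperMul (g : ZMod 2 → Submodule S A)
    (m2 : (A ⊗[S] A) →ₗ[S] (A ⊗[S] A) →ₗ[S] (A ⊗[S] A)) : Prop :=
  ∀ (pb pc : ZMod 2) (a b c d : A), b ∈ g pb → c ∈ g pc →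
    m2 (a ⊗ₜ[S] b) (c ⊗ₜ[S] d) = sg S (pb * pc) • ((a * c) ⊗ₜ[S] (b * d))

/-- The axioms of a (ℤ₂-graded) superbialgebra over `S`, with coproduct `cop`
and counit `cou`; `m2` is the super multiplication of `A ⊗ A`. -/
structure IsSuperBialg (g : ZMod 2 → Submodule S A)
    (m2 : (A ⊗[S] A) →ₗ[S] (A ⊗[S] A) →ₗ[S] (A ⊗[S] A))
    (cop : A →ₗ[S] A ⊗[S] A) (cou : A →ₗ[S] S) : Prop where
  grading : SuperGrading S A g
  superMul : IsSuperMul S A g m2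
  comul_one : cop 1 = (1 : A) ⊗ₜ[S] (1 : A)
  comul_mul : ∀ x y : A, cop (x * y) = m2 (cop x) (cop y)
  counit_one : cou 1 = 1
  counit_mul : ∀ x y : A, cou (x * y) = cou x * cou y
  coassoc : ∀ x : A,
    (TensorProduct.assoc S A A A)
        ((TensorProduct.map cop (LinearMap.id : A →ₗ[S] A)) (cop x))
      = (TensorProduct.map (LinearMap.id : A →ₗ[S] A) cop) (cop x)
  counit_comul : ∀ x : A,
    (TensorProduct.lid S A) ((TensorProduct.map cou (LinearMap.id : A →ₗ[S] A)) (cop x)) = x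
  comul_counit : ∀ x : A,
    (TensorProduct.rid S A) ((TensorProduct.map (LinearMap.id : A →ₗ[S] A) cou) (cop x)) = x
  comul_parity : ∀ i : ZMod 2, ∀ x ∈ g i, cop x ∈
    Submodule.span S {t : A ⊗[S] A | ∃ j : ZMod 2, ∃ y ∈ g j, ∃ z ∈ g (i + j), t = y ⊗ₜ[S] z}
  counit_odd : ∀ x ∈ g 1, cou x = 0

/-- `St` is an antipode for the superbialgebra `(A, cop, cou)`. -/
def IsAntipode (cop : A →ₗ[S] A ⊗[S] A) (cou : A →ₗ[S] S) (St : A →ₗ[S] A) : Prop :=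
  (∀ x : A, (LinearMap.mul' S A)
      ((TensorProduct.map St (LinearMap.id : A →ₗ[S] A)) (cop x)) = algebraMap S A (cou x)) ∧
  (∀ x : A, (LinearMap.mul' S A)
      ((TensorProduct.map (LinearMap.id : A →ₗ[S] A) St) (cop x)) = algebraMap S A (cou x))

/-- The two-sided ideal generated by a set `T`, as a submodule. -/
def tsi (T : Set A) : Submodule S A :=
  Submodule.span S {x : A | ∃ a b : A, ∃ s ∈ T, x = a * s * b}

/-- `A` is topologically generated by `T` with respect to the filtration `Fl`. -/
def TopGenBy (Fl : ℕ → Submodule S A) (T : Set A) : Prop :=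
  ∀ a : A, ∀ N : ℕ, ∃ b ∈ Algebra.adjoin S T, a - b ∈ Fl N

end Alg

section Mod
variable (M : Type) [AddCommGroup M] [Module S M]

/-- The `r`-adic filtration on a module. -/
def adicFil (r : S) (N : ℕ) : Submodule S M :=
  Submodule.span S {x : M | ∃ y : M, x = r ^ N • y}

/-- Separatedness and completeness with respect to a filtration of submodules. -/
def CompleteWRT (Fl : ℕ → Submodule S M) : Prop :=
  (∀ x : M, (∀ N, x ∈ Fl N) → x = 0) ∧
  (∀ f : ℕ → M, (∀ N, f (N + 1) - f N ∈ Fl N) → ∃ x : M, ∀ N, x - f N ∈ Fl N)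

/-- A representation of a tensor `t ∈ M ⊗ M` as a finite sum of pure tensors
with homogeneous factors (of the prescribed parities). -/
def Rep (g : ZMod 2 → Submodule S M) (t : M ⊗[S] M) (ι : Type) (s : Finset ι)
    (a b : ι → M) (pa pb : ι → ZMod 2) : Prop :=
  t = ∑ i ∈ s, a i ⊗ₜ[S] b i ∧ ∀ i ∈ s, a i ∈ g (pa i) ∧ b i ∈ g (pb i)

/-- A homogeneous representation of the double coproduct `(Δ ⊗ id)(Δ x)`. -/
def Rep3 (g : ZMod 2 → Submodule S M) (cop : M →ₗ[S] M ⊗[S] M) (x : M) (ι : Type)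
    (s : Finset ι) (a b c : ι → M) (pa pb pc : ι → ZMod 2) : Prop :=
  ((TensorProduct.map cop (LinearMap.id : M →ₗ[S] M)) (cop x)
      = ∑ i ∈ s, (a i ⊗ₜ[S] b i) ⊗ₜ[S] c i) ∧
  ∀ i ∈ s, a i ∈ g (pa i) ∧ b i ∈ g (pb i) ∧ c i ∈ g (pc i)

/-- `σ'` is a convolution inverse of the bilinear form `σ` (with Koszul signs). -/
def ConvInverse (g : ZMod 2 → Submodule S M) (cop : M →ₗ[S] M ⊗[S] M) (cou : M →ₗ[S] S)
    (σ σ' : M →ₗ[S] M →ₗ[S] S) : Prop :=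
  ∀ x y : M, ∀ (ι : Type) (s : Finset ι) (a b : ι → M) (pa pb : ι → ZMod 2),
    Rep S M g (cop x) ι s a b pa pb →
    ∀ (ι' : Type) (s' : Finset ι') (c d : ι' → M) (pc pd : ι' → ZMod 2),
      Rep S M g (cop y) ι' s' c d pc pd →
    (∑ i ∈ s, ∑ j ∈ s', sg S (pb i * pc j) * (σ (a i) (c j) * σ' (b i) (d j))
        = cou x * cou y) ∧
    (∑ i ∈ s, ∑ j ∈ s', sg S (pb i * pc j) * (σ' (a i) (c j) * σ (b i) (d j))
        = cou x * cou y)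

/-- `σ` is a (normalized, convolution-invertible) 2-cocycle for the
super-coalgebra-with-multiplication `(M, mul, one, cop, cou)`;
the Sweedler-type identities are expressed through homogeneous representations
of the coproducts (with Koszul signs). -/
structure Is2Cocycle (g : ZMod 2 → Submodule S M) (mul : M → M → M) (one : M)
    (cop : M →ₗ[S] M ⊗[S] M) (cou : M →ₗ[S] S) (σ : M →ₗ[S] M →ₗ[S] S) : Prop where
  norm_right : ∀ x : M, σ x one = cou x
  norm_left : ∀ x : M, σ one x = cou x
  conv_inv : ∃ σ' : M →ₗ[S] M →ₗ[S] S, ConvInverse S M g cop cou σ σ'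
  cocycle : ∀ x y z : M,
    ∀ (ι : Type) (s : Finset ι) (a b : ι → M) (pa pb : ι → ZMod 2),
      Rep S M g (cop x) ι s a b pa pb →
    ∀ (ι' : Type) (s' : Finset ι') (c d : ι' → M) (pc pd : ι' → ZMod 2),
      Rep S M g (cop y) ι' s' c d pc pd →
    ∀ (ι'' : Type) (s'' : Finset ι'') (u v : ι'' → M) (pu pv : ι'' → ZMod 2),
      Rep S M g (cop z) ι'' s'' u v pu pv →
    ∑ i ∈ s, ∑ j ∈ s', sg S (pb i * pc j) * (σ (a i) (c j) * σ (mul (b i) (d j)) z)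
      = ∑ j ∈ s', ∑ l ∈ s'', sg S (pd j * pu l) * (σ (c j) (u l) * σ x (mul (d j) (v l)))

/-- `mulσ` is the 2-cocycle deformation of the product `mul` by the 2-cocycle `σ`
(with convolution inverse `σ'`):  `x ·σ y = σ(x₁,y₁) x₂y₂ σ'(x₃,y₃)`
(with Koszul signs), expressed through homogeneous representations. -/
def IsCocycleDeform (g : ZMod 2 → Submodule S M) (mul : M → M → M)
    (cop : M →ₗ[S] M ⊗[S] M) (σ σ' : M →ₗ[S] M →ₗ[S] S) (mulσ : M → M → M) : Prop :=
  ∀ x y : M,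
    ∀ (ι : Type) (s : Finset ι) (a b c : ι → M) (pa pb pc : ι → ZMod 2),
      Rep3 S M g cop x ι s a b c pa pb pc →
    ∀ (ι' : Type) (s' : Finset ι') (d e f : ι' → M) (pd pe pf : ι' → ZMod 2),
      Rep3 S M g cop y ι' s' d e f pd pe pf →
    mulσ x y = ∑ i ∈ s, ∑ j ∈ s',
      (sg S (pd j * (pb i + pc i) + pe j * pc i) * (σ (a i) (d j) * σ' (c i) (f j)))
        • mul (b i) (e j)

/-- Iterated powers with respect to a bilinear multiplication map. -/
def spow (m2 : M →ₗ[S] M →ₗ[S] M) (one : M) (z : M) : ℕ → M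
  | 0 => one
  | (m + 1) => m2 z (spow m2 one z m)

end Mod

section Pairing
variable (Fc : Type) [Ring Fc] [Algebra S Fc] (Uc : Type) [Ring Uc] [Algebra S Uc]

/-- `B2` extends the pairing `B` to tensor squares with the Koszul sign rule:
`⟨f₁ ⊗ f₂ , u₁ ⊗ u₂⟩ = (−1)^{|f₂||u₁|} ⟨f₁,u₁⟩⟨f₂,u₂⟩`. -/
def IsPairing2 (gF : ZMod 2 → Submodule S Fc) (gU : ZMod 2 → Submodule S Uc)
    (B : Fc →ₗ[S] Uc →ₗ[S] S)
    (B2 : (Fc ⊗[S] Fc) →ₗ[S] (Uc ⊗[S] Uc) →ₗ[S] S) : Prop :=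
  ∀ (pf pu : ZMod 2) (f1 f2 : Fc) (u1 u2 : Uc), f2 ∈ gF pf → u1 ∈ gU pu →
    B2 (f1 ⊗ₜ[S] f2) (u1 ⊗ₜ[S] u2) = sg S (pf * pu) * (B f1 u1 * B f2 u2)

/-- A pairing of superbialgebras: product on one side is dual to coproduct on
the other (with Koszul signs), and units/counits correspond. -/
structure IsBialgPairing (gF : ZMod 2 → Submodule S Fc) (gU : ZMod 2 → Submodule S Uc)
    (copF : Fc →ₗ[S] Fc ⊗[S] Fc) (couF : Fc →ₗ[S] S)
    (copU : Uc →ₗ[S] Uc ⊗[S] Uc) (couU : Uc →ₗ[S] S)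
    (B : Fc →ₗ[S] Uc →ₗ[S] S)
    (B2 : (Fc ⊗[S] Fc) →ₗ[S] (Uc ⊗[S] Uc) →ₗ[S] S) : Prop where
  pair2 : IsPairing2 S Fc Uc gF gU B B2
  mulU : ∀ (f : Fc) (u u' : Uc), B f (u * u') = B2 (copF f) (u ⊗ₜ[S] u')
  mulF : ∀ (f f' : Fc) (u : Uc), B (f * f') u = B2 (f ⊗ₜ[S] f') (copU u)
  oneU : ∀ f : Fc, B f 1 = couF f
  oneF : ∀ u : Uc, B 1 u = couU u

/-- Non-degeneracy of a pairing. -/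
def Nondeg (B : Fc →ₗ[S] Uc →ₗ[S] S) : Prop :=
  (∀ f : Fc, (∀ u : Uc, B f u = 0) → f = 0) ∧
  (∀ u : Uc, (∀ f : Fc, B f u = 0) → u = 0)

end Pairing

end Generic

/-! ## The formal setting: base ring `k[[ℏ]]` -/

section Formal
variable (k : Type) [Field k] [CharZero k]

/-- The base ring `k[[ℏ]]`. -/
abbrev Rk := PowerSeries k

/-- `exp(g)` as a power series (intended for `g` with zero constant term). -/
def expOf (g : Rk k) : Rk k :=
  PowerSeries.mk fun m =>
    ∑ j ∈ Finset.range (m + 1), ((j.factorial : k)⁻¹) * (PowerSeries.coeff m (g ^ j))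

/-- `q := exp ℏ`. -/
def qq : Rk k := expOf k PowerSeries.X

/-- `q⁻¹ = exp (−ℏ)`. -/
def qqInv : Rk k := expOf k (-PowerSeries.X)

/-- `q_s := q^{(−1)^{p(s)}}`. -/
def qpar (p : ℕ → ZMod 2) (s : ℕ) : Rk k := if p s = 0 then qq k else qqInv k

/-- `q_s⁻¹ = q^{−(−1)^{p(s)}}`. -/
def qparInv (p : ℕ → ZMod 2) (s : ℕ) : Rk k := if p s = 0 then qqInv k else qq k

/-- The ℏ-adic filtration on a `k[[ℏ]]`-module. -/
def hFil (M : Type) [AddCommGroup M] [Module (Rk k) M] : ℕ → Submodule (Rk k) M :=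
  adicFil (Rk k) M (PowerSeries.X)

/-- `u = exp(ℏ a)`, expressed through ℏ-adic approximation by the partial sums
`∑_{m<N} (ℏ^m/m!) a^m`. -/
def IsExp (A : Type) [Ring A] [Algebra (Rk k) A] (u a : A) : Prop :=
  ∀ N : ℕ, u - ∑ m ∈ Finset.range N,
      algebraMap (Rk k) A (PowerSeries.C ((m.factorial : k)⁻¹) * PowerSeries.X ^ m) * a ^ m
    ∈ hFil k A N

variable (n : ℕ) (p : ℕ → ZMod 2)

section YamDefs
variable (A : Type) [Ring A] [Algebra (Rk k) A]

/-- `H_i := (−1)^{p(i)} Γ_i − (−1)^{p(i+1)} Γ_{i+1}`. -/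
def Hcar (Γg : ℕ → A) (i : ℕ) : A :=
  sg (Rk k) (p i) • Γg i - sg (Rk k) (p (i + 1)) • Γg (i + 1)

/-- The defining relations (2.1)–(2.7) of Yamane's QUESA `U_ℏ(gl_n^p)`, for elements
`E, Γg, F` of an ℏ-adically complete superalgebra `A`, where `expl a` denotes
`exp(ℏ a)`.  The relation `[E_i,F_j] = δ_{ij} (e^{ℏH_i}−e^{−ℏH_i})/(q_i−q_i⁻¹)` is
stated multiplied through by `q_i − q_i⁻¹` (`A` being ℏ-torsion free). -/
structure YamaneRels (E Γg F : ℕ → A) (expl : A → A) : Prop where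
  relΓΓ : ∀ k' ∈ Finset.Icc 1 n, ∀ l ∈ Finset.Icc 1 n, Γg k' * Γg l = Γg l * Γg k'
  relΓE : ∀ k' ∈ Finset.Icc 1 n, ∀ j ∈ Finset.Icc 1 (n - 1),
    Γg k' * E j - E j * Γg k'
      = (((if k' = j then 1 else 0) - (if k' = j + 1 then 1 else 0) : Rk k)) • E j
  relΓF : ∀ k' ∈ Finset.Icc 1 n, ∀ j ∈ Finset.Icc 1 (n - 1),
    Γg k' * F j - F j * Γg k'
      = (((if k' = j + 1 then 1 else 0) - (if k' = j then 1 else 0) : Rk k)) • F j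
  relEF : ∀ i ∈ Finset.Icc 1 (n - 1), ∀ j ∈ Finset.Icc 1 (n - 1),
    (qpar k p i - qparInv k p i) •
        (E i * F j - sg (Rk k) (pp p i (i + 1) * pp p j (j + 1)) • (F j * E i))
      = (if i = j then (1 : Rk k) else 0) •
          (expl (Hcar k p A Γg i) - expl (-Hcar k p A Γg i))
  relSq : ∀ i ∈ Finset.Icc 1 (n - 1), pp p i (i + 1) = 1 → E i ^ 2 = 0 ∧ F i ^ 2 = 0
  relEE : ∀ i ∈ Finset.Icc 1 (n - 1), ∀ j ∈ Finset.Icc 1 (n - 1), (i + 1 < j ∨ j + 1 < i) →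
    E i * E j = sg (Rk k) (pp p i (i + 1) * pp p j (j + 1)) • (E j * E i)
  relFF : ∀ i ∈ Finset.Icc 1 (n - 1), ∀ j ∈ Finset.Icc 1 (n - 1), (i + 1 < j ∨ j + 1 < i) →
    F i * F j = sg (Rk k) (pp p i (i + 1) * pp p j (j + 1)) • (F j * F i)
  relSerreE : ∀ i ∈ Finset.Icc 1 (n - 1), ∀ j ∈ Finset.Icc 1 (n - 1),
    pp p i (i + 1) = 0 → (j = i + 1 ∨ i = j + 1) →
    E i ^ 2 * E j - (qq k + qqInv k) • (E i * E j * E i) + E j * E i ^ 2 = 0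
  relSerreF : ∀ i ∈ Finset.Icc 1 (n - 1), ∀ j ∈ Finset.Icc 1 (n - 1),
    pp p i (i + 1) = 0 → (j = i + 1 ∨ i = j + 1) →
    F i ^ 2 * F j - (qq k + qqInv k) • (F i * F j * F i) + F j * F i ^ 2 = 0
  relHighE : ∀ i : ℕ, 1 ≤ i → i + 2 ≤ n - 1 → pp p (i + 1) (i + 2) = 1 →
    let a := E i
    let b := E (i + 1)
    let c := E (i + 2)
    let pa := pp p i (i + 1)
    let pb := pp p (i + 1) (i + 2)
    let pc := pp p (i + 2) (i + 3)
    let X1 := a * b - (qpar k p (i + 1) * sg (Rk k) (pa * pb)) • (b * a)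
    let X2 := X1 * c - (qpar k p (i + 2) * sg (Rk k) ((pa + pb) * pc)) • (c * X1)
    X2 * b - sg (Rk k) ((pa + pb + pc) * pb) • (b * X2) = 0
  relHighF : ∀ i : ℕ, 1 ≤ i → i + 2 ≤ n - 1 → pp p (i + 1) (i + 2) = 1 →
    let a := F i
    let b := F (i + 1)
    let c := F (i + 2)
    let pa := pp p i (i + 1)
    let pb := pp p (i + 1) (i + 2)
    let pc := pp p (i + 2) (i + 3)
    let X1 := a * b - (qpar k p (i + 1) * sg (Rk k) (pa * pb)) • (b * a)
    let X2 := X1 * c - (qpar k p (i + 2) * sg (Rk k) ((pa + pb) * pc)) • (c * X1)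
    X2 * b - sg (Rk k) ((pa + pb + pc) * pb) • (b * X2) = 0

end YamDefs

/-- Yamane's QUESA `U_ℏ(gl_n^p)`: an ℏ-adically complete topological superalgebra
over `k[[ℏ]]`, topologically generated by `E_i, Γ_k, F_i` subject to the relations
(2.1)–(2.7), together with its universal property among complete superalgebras. -/
structure YamaneAlg where
  A : Type
  [ringA : Ring A]
  [algA : Algebra (Rk k) A]
  g : ZMod 2 → Submodule (Rk k) A
  grading : SuperGrading (Rk k) A g
  E : ℕ → A
  Γg : ℕ → A
  F : ℕ → A
  /-- `expl a = exp(ℏ a)`. -/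
  expl : A → A
  expl_spec : ∀ a : A, IsExp k A (expl a) a
  parE : ∀ i ∈ Finset.Icc 1 (n - 1), E i ∈ g (pp p i (i + 1))
  parΓ : ∀ s ∈ Finset.Icc 1 n, Γg s ∈ g 0
  parF : ∀ i ∈ Finset.Icc 1 (n - 1), F i ∈ g (pp p i (i + 1))
  rels : YamaneRels k n p A E Γg F expl
  complete : CompleteWRT (Rk k) A (hFil k A)
  torsionfree : ∀ a : A, (PowerSeries.X : Rk k) • a = 0 → a = 0
  topgen : TopGenBy (Rk k) A (hFil k A)
    ({x : A | ∃ i ∈ Finset.Icc 1 (n - 1), x = E i}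
      ∪ {x : A | ∃ s ∈ Finset.Icc 1 n, x = Γg s}
      ∪ {x : A | ∃ i ∈ Finset.Icc 1 (n - 1), x = F i})
  univ : ∀ (B : Type) [Ring B] [Algebra (Rk k) B] (E' Γ' F' : ℕ → B) (expl' : B → B),
    (∀ b : B, IsExp k B (expl' b) b) →
    YamaneRels k n p B E' Γ' F' expl' →
    CompleteWRT (Rk k) B (hFil k B) →
    ∃ φ : A →ₐ[Rk k] B,
      (∀ i ∈ Finset.Icc 1 (n - 1), φ (E i) = E' i) ∧
      (∀ s ∈ Finset.Icc 1 n, φ (Γg s) = Γ' s) ∧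
      (∀ i ∈ Finset.Icc 1 (n - 1), φ (F i) = F' i)

attribute [instance] YamaneAlg.ringA YamaneAlg.algA

/-- The formulas of Theorem 2.4 for the standard Hopf superalgebra structure of
Yamane's QUESA, on the generators. -/
def YamaneHopfFormulas (U : YamaneAlg k n p)
    (cop : U.A →ₗ[Rk k] U.A ⊗[Rk k] U.A) (cou : U.A →ₗ[Rk k] Rk k)
    (St : U.A →ₗ[Rk k] U.A) : Prop :=
  (∀ i ∈ Finset.Icc 1 (n - 1),
      cop (U.E i) = U.E i ⊗ₜ[Rk k] (1 : U.A) + U.expl (Hcar k p U.A U.Γg i) ⊗ₜ[Rk k] U.E i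
    ∧ St (U.E i) = -(U.expl (-Hcar k p U.A U.Γg i) * U.E i)
    ∧ cou (U.E i) = 0) ∧
  (∀ s ∈ Finset.Icc 1 n,
      cop (U.Γg s) = U.Γg s ⊗ₜ[Rk k] (1 : U.A) + (1 : U.A) ⊗ₜ[Rk k] U.Γg s
    ∧ St (U.Γg s) = -U.Γg s
    ∧ cou (U.Γg s) = 0) ∧
  (∀ i ∈ Finset.Icc 1 (n - 1),
      cop (U.F i) = U.F i ⊗ₜ[Rk k] U.expl (-Hcar k p U.A U.Γg i) + (1 : U.A) ⊗ₜ[Rk k] U.F i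
    ∧ St (U.F i) = -(U.F i * U.expl (Hcar k p U.A U.Γg i))
    ∧ cou (U.F i) = 0)

/-- Yamane's QUESA together with its standard topological Hopf superalgebra structure. -/
structure YamaneHopf extends YamaneAlg k n p where
  m2 : (A ⊗[Rk k] A) →ₗ[Rk k] (A ⊗[Rk k] A) →ₗ[Rk k] (A ⊗[Rk k] A)
  cop : A →ₗ[Rk k] A ⊗[Rk k] A
  cou : A →ₗ[Rk k] Rk k
  ant : A →ₗ[Rk k] A
  bialg : IsSuperBialg (Rk k) A g m2 cop cou
  antipode : IsAntipode (Rk k) A cop cou ant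
  formulas : YamaneHopfFormulas k n p toYamaneAlg cop cou ant

/-! ### The QFSHSA `F_ℏ[[GL_n^p]]` -/

section FGLDefs
variable (A : Type) [Ring A] [Algebra (Rk k) A]

/-- The defining relations of `F_ℏ[[GL_n^p]]` (Theorem 3.3(a)). -/
structure FGLRels (x : ℕ → ℕ → A) : Prop where
  sq : ∀ i ∈ Finset.Icc 1 n, ∀ j ∈ Finset.Icc 1 n, pp p i j = 1 → x i j ^ 2 = 0
  row : ∀ i ∈ Finset.Icc 1 n, ∀ j ∈ Finset.Icc 1 n, ∀ k' ∈ Finset.Icc 1 n, j < k' →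
    x i j * x i k' = (sg (Rk k) (pp p i j * pp p i k') * qpar k p i) • (x i k' * x i j)
  col : ∀ i ∈ Finset.Icc 1 n, ∀ h ∈ Finset.Icc 1 n, ∀ j ∈ Finset.Icc 1 n, i < h →
    x i j * x h j = (sg (Rk k) (pp p i j * pp p h j) * qpar k p j) • (x h j * x i j)
  anti : ∀ i ∈ Finset.Icc 1 n, ∀ h ∈ Finset.Icc 1 n, ∀ j ∈ Finset.Icc 1 n,
    ∀ k' ∈ Finset.Icc 1 n, i < h → k' < j →
    x i j * x h k' = sg (Rk k) (pp p i j * pp p h k') • (x h k' * x i j)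
  syn : ∀ i ∈ Finset.Icc 1 n, ∀ h ∈ Finset.Icc 1 n, ∀ j ∈ Finset.Icc 1 n,
    ∀ k' ∈ Finset.Icc 1 n, i < h → j < k' →
    x i j * x h k' = sg (Rk k) (pp p i j * pp p h k') • (x h k' * x i j)
      + (sg (Rk k) (pp p i j * pp p i k') * (qpar k p i - qparInv k p i)) • (x i k' * x h j)

/-- The `I_ℏ`-adic filtration, `I_ℏ` being the two-sided ideal generated by the
`x_{ij} − δ_{ij}` together with `ℏ·1`. -/
def IhFil (x : ℕ → ℕ → A) (N : ℕ) : Submodule (Rk k) A :=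
  (tsi (Rk k) A
    ({a : A | ∃ i ∈ Finset.Icc 1 n, ∃ j ∈ Finset.Icc 1 n,
        a = x i j - (if i = j then (1 : A) else 0)}
      ∪ {(PowerSeries.X : Rk k) • (1 : A)})) ^ N

end FGLDefs

/-- The quantum formal series Hopf superalgebra `F_ℏ[[GL_n^p]]` of Theorem 3.3:
a topological superbialgebra over `k[[ℏ]]`, topologically generated by the
`x_{ij}` subject to the relations (a), `I_ℏ`-adically complete, with coproduct
and counit (c), and universal among such objects. -/
structure FGLAlg where
  A : Type
  [ringA : Ring A]
  [algA : Algebra (Rk k) A]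
  g : ZMod 2 → Submodule (Rk k) A
  x : ℕ → ℕ → A
  parx : ∀ i ∈ Finset.Icc 1 n, ∀ j ∈ Finset.Icc 1 n, x i j ∈ g (pp p i j)
  rels : FGLRels k n p A x
  m2 : (A ⊗[Rk k] A) →ₗ[Rk k] (A ⊗[Rk k] A) →ₗ[Rk k] (A ⊗[Rk k] A)
  cop : A →ₗ[Rk k] A ⊗[Rk k] A
  cou : A →ₗ[Rk k] Rk k
  bialg : IsSuperBialg (Rk k) A g m2 cop cou
  copx : ∀ i ∈ Finset.Icc 1 n, ∀ j ∈ Finset.Icc 1 n,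
    cop (x i j)
      = ∑ a ∈ Finset.Icc 1 n, sg (Rk k) (pp p i a * pp p a j) • (x i a ⊗ₜ[Rk k] x a j)
  coux : ∀ i ∈ Finset.Icc 1 n, ∀ j ∈ Finset.Icc 1 n,
    cou (x i j) = if i = j then 1 else 0
  complete : CompleteWRT (Rk k) A (IhFil k n A x)
  torsionfree : ∀ a : A, (PowerSeries.X : Rk k) • a = 0 → a = 0
  topgen : TopGenBy (Rk k) A (IhFil k n A x)
    {a : A | ∃ i ∈ Finset.Icc 1 n, ∃ j ∈ Finset.Icc 1 n, a = x i j}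
  univ : ∀ (B : Type) [Ring B] [Algebra (Rk k) B] (y : ℕ → ℕ → B),
    FGLRels k n p B y → CompleteWRT (Rk k) B (IhFil k n B y) →
    ∃ φ : A →ₐ[Rk k] B, ∀ i ∈ Finset.Icc 1 n, ∀ j ∈ Finset.Icc 1 n, φ (x i j) = y i j

attribute [instance] FGLAlg.ringA FGLAlg.algA

/-- The values of the Hopf pairing on the generators (3.16)/(3.21). -/
def PairGenVals (Ua : YamaneAlg k n p) (FA : Type) [Ring FA] [Algebra (Rk k) FA]
    (x : ℕ → ℕ → FA) (B : FA →ₗ[Rk k] Ua.A →ₗ[Rk k] Rk k) : Prop :=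
  ∀ i ∈ Finset.Icc 1 n, ∀ j ∈ Finset.Icc 1 n,
    (∀ t ∈ Finset.Icc 1 (n - 1),
      B (x i j) (Ua.E t) = (if i = t ∧ j = t + 1 then 1 else 0) ∧
      B (x i j) (Ua.F t) = (if i = t + 1 ∧ j = t then 1 else 0)) ∧
    (∀ kk ∈ Finset.Icc 1 n, B (x i j) (Ua.Γg kk) = (if i = kk ∧ j = kk then 1 else 0))

/-! ### Multiparametric objects -/

section PhiDefs
variable (A : Type) [Ring A] [Algebra (Rk k) A]

/-- `T_{i,+}^Φ := 2⁻¹ ∑_ℓ (φ_{i,ℓ} − φ_{i+1,ℓ}) Γ_ℓ`. -/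
def Tpl (Γg : ℕ → A) (φ : ℕ → ℕ → Rk k) (i : ℕ) : A :=
  ∑ l ∈ Finset.Icc 1 n, (PowerSeries.C ((2 : k)⁻¹) * (φ i l - φ (i + 1) l)) • Γg l

/-- `T_{i,−}^Φ := 2⁻¹ ∑_ℓ (φ_{ℓ,i} − φ_{ℓ,i+1}) Γ_ℓ`. -/
def Tmn (Γg : ℕ → A) (φ : ℕ → ℕ → Rk k) (i : ℕ) : A :=
  ∑ l ∈ Finset.Icc 1 n, (PowerSeries.C ((2 : k)⁻¹) * (φ l i - φ l (i + 1))) • Γg l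

/-- The defining relations of the multiparametric QFSHSA `F_ℏ^Φ[[GL_n^p]]`
(Theorem 3.10(a)), with `q_{r,s} := e^{ℏ φ_{r,s}}`. -/
structure FGLPhiRels (φ : ℕ → ℕ → Rk k) (x : ℕ → ℕ → A) : Prop where
  sq : ∀ i ∈ Finset.Icc 1 n, ∀ j ∈ Finset.Icc 1 n, pp p i j = 1 → x i j ^ 2 = 0
  row : ∀ i ∈ Finset.Icc 1 n, ∀ j ∈ Finset.Icc 1 n, ∀ k' ∈ Finset.Icc 1 n, j < k' →
    x i j * x i k'
      = (sg (Rk k) (pp p i j * pp p i k') * qpar k p i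
          * expOf k (-(PowerSeries.X * φ j k'))) • (x i k' * x i j)
  col : ∀ i ∈ Finset.Icc 1 n, ∀ h ∈ Finset.Icc 1 n, ∀ j ∈ Finset.Icc 1 n, i < h →
    x i j * x h j
      = (sg (Rk k) (pp p i j * pp p h j) * qpar k p j
          * expOf k (PowerSeries.X * φ i h)) • (x h j * x i j)
  anti : ∀ i ∈ Finset.Icc 1 n, ∀ h ∈ Finset.Icc 1 n, ∀ j ∈ Finset.Icc 1 n,
    ∀ k' ∈ Finset.Icc 1 n, i < h → k' < j →
    x i j * x h k'
      = (sg (Rk k) (pp p i j * pp p h k') * expOf k (PowerSeries.X * φ i h)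
          * expOf k (-(PowerSeries.X * φ j k'))) • (x h k' * x i j)
  syn : ∀ i ∈ Finset.Icc 1 n, ∀ h ∈ Finset.Icc 1 n, ∀ j ∈ Finset.Icc 1 n,
    ∀ k' ∈ Finset.Icc 1 n, i < h → j < k' →
    x i j * x h k'
      = (sg (Rk k) (pp p i j * pp p h k') * expOf k (PowerSeries.X * φ i h)
          * expOf k (-(PowerSeries.X * φ j k'))) • (x h k' * x i j)
        + (sg (Rk k) (pp p i j * pp p i k') * (qpar k p i - qparInv k p i)
            * expOf k (-(PowerSeries.X * φ j k'))) • (x i k' * x h j)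

end PhiDefs

/-- The multiparametric QFSHSA `F_ℏ^Φ[[GL_n^p]]` of Theorem 3.10. -/
structure FGLPhiAlg (φ : ℕ → ℕ → Rk k) where
  A : Type
  [ringA : Ring A]
  [algA : Algebra (Rk k) A]
  g : ZMod 2 → Submodule (Rk k) A
  x : ℕ → ℕ → A
  parx : ∀ i ∈ Finset.Icc 1 n, ∀ j ∈ Finset.Icc 1 n, x i j ∈ g (pp p i j)
  rels : FGLPhiRels k n p A φ x
  m2 : (A ⊗[Rk k] A) →ₗ[Rk k] (A ⊗[Rk k] A) →ₗ[Rk k] (A ⊗[Rk k] A)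
  cop : A →ₗ[Rk k] A ⊗[Rk k] A
  cou : A →ₗ[Rk k] Rk k
  bialg : IsSuperBialg (Rk k) A g m2 cop cou
  copx : ∀ i ∈ Finset.Icc 1 n, ∀ j ∈ Finset.Icc 1 n,
    cop (x i j)
      = ∑ a ∈ Finset.Icc 1 n, sg (Rk k) (pp p i a * pp p a j) • (x i a ⊗ₜ[Rk k] x a j)
  coux : ∀ i ∈ Finset.Icc 1 n, ∀ j ∈ Finset.Icc 1 n,
    cou (x i j) = if i = j then 1 else 0
  complete : CompleteWRT (Rk k) A (IhFil k n A x)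
  torsionfree : ∀ a : A, (PowerSeries.X : Rk k) • a = 0 → a = 0
  topgen : TopGenBy (Rk k) A (IhFil k n A x)
    {a : A | ∃ i ∈ Finset.Icc 1 n, ∃ j ∈ Finset.Icc 1 n, a = x i j}
  univ : ∀ (B : Type) [Ring B] [Algebra (Rk k) B] (y : ℕ → ℕ → B),
    FGLPhiRels k n p B φ y → CompleteWRT (Rk k) B (IhFil k n B y) →
    ∃ ψ : A →ₐ[Rk k] B, ∀ i ∈ Finset.Icc 1 n, ∀ j ∈ Finset.Icc 1 n, ψ (x i j) = y i j

attribute [instance] FGLPhiAlg.ringA FGLPhiAlg.algA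

/-- The formulas of Theorem 2.7 for the multiparametric Hopf structure on the
generators of `U_ℏ^Φ(gl_n^p)`. -/
def YamanePhiFormulas (φ : ℕ → ℕ → Rk k) (U : YamaneAlg k n p)
    (cop : U.A →ₗ[Rk k] U.A ⊗[Rk k] U.A) (cou : U.A →ₗ[Rk k] Rk k)
    (St : U.A →ₗ[Rk k] U.A) : Prop :=
  (∀ i ∈ Finset.Icc 1 (n - 1),
      cop (U.E i)
        = U.E i ⊗ₜ[Rk k] U.expl (Tpl k n U.A U.Γg φ i)
          + U.expl (Hcar k p U.A U.Γg i + Tmn k n U.A U.Γg φ i) ⊗ₜ[Rk k] U.E i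
    ∧ cou (U.E i) = 0
    ∧ St (U.E i)
        = -(U.expl (-(Hcar k p U.A U.Γg i + Tmn k n U.A U.Γg φ i)) * U.E i
            * U.expl (-Tpl k n U.A U.Γg φ i))) ∧
  (∀ s ∈ Finset.Icc 1 n,
      cop (U.Γg s) = U.Γg s ⊗ₜ[Rk k] (1 : U.A) + (1 : U.A) ⊗ₜ[Rk k] U.Γg s
    ∧ cou (U.Γg s) = 0
    ∧ St (U.Γg s) = -U.Γg s) ∧
  (∀ i ∈ Finset.Icc 1 (n - 1),
      cop (U.F i)
        = U.F i ⊗ₜ[Rk k] U.expl (-(Hcar k p U.A U.Γg i + Tpl k n U.A U.Γg φ i))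
          + U.expl (-Tmn k n U.A U.Γg φ i) ⊗ₜ[Rk k] U.F i
    ∧ cou (U.F i) = 0
    ∧ St (U.F i)
        = -(U.expl (Tmn k n U.A U.Γg φ i) * U.F i
            * U.expl (Hcar k p U.A U.Γg i + Tpl k n U.A U.Γg φ i)))

/-- The multiparametric QUESA `U_ℏ^Φ(gl_n^p)`: Yamane's algebra with the twisted
Hopf superalgebra structure of Theorem 2.7. -/
structure YamanePhiHopf (φ : ℕ → ℕ → Rk k) extends YamaneAlg k n p where
  m2 : (A ⊗[Rk k] A) →ₗ[Rk k] (A ⊗[Rk k] A) →ₗ[Rk k] (A ⊗[Rk k] A)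
  cop : A →ₗ[Rk k] A ⊗[Rk k] A
  cou : A →ₗ[Rk k] Rk k
  ant : A →ₗ[Rk k] A
  bialg : IsSuperBialg (Rk k) A g m2 cop cou
  antipode : IsAntipode (Rk k) A cop cou ant
  formulas : YamanePhiFormulas k n p φ toYamaneAlg cop cou ant

/-- The argument `ℏ·2⁻¹ ∑_{t,ℓ} φ_{t,ℓ} Γ_t ⊗ Γ_ℓ` of the exponential defining
the twist `F_Φ`. -/
def twistElt (U : YamaneAlg k n p) (φ : ℕ → ℕ → Rk k) : U.A ⊗[Rk k] U.A :=
  ∑ t ∈ Finset.Icc 1 n, ∑ l ∈ Finset.Icc 1 n,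
    (PowerSeries.C ((2 : k)⁻¹) * (PowerSeries.X * φ t l)) • (U.Γg t ⊗ₜ[Rk k] U.Γg l)

/-- The `N`-th partial sum of the exponential series for the twist
`F_Φ = exp(ℏ·2⁻¹ ∑ φ_{t,ℓ} Γ_t ⊗ Γ_ℓ)`, powers being taken with respect to the
super multiplication `m2` of `U ⊗ U`. -/
def twistPartial (U : YamaneAlg k n p)
    (m2 : (U.A ⊗[Rk k] U.A) →ₗ[Rk k] (U.A ⊗[Rk k] U.A) →ₗ[Rk k] (U.A ⊗[Rk k] U.A))
    (φ : ℕ → ℕ → Rk k) (N : ℕ) : U.A ⊗[Rk k] U.A :=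
  ∑ m ∈ Finset.range N, (PowerSeries.C ((m.factorial : k)⁻¹)) •
    spow (Rk k) (U.A ⊗[Rk k] U.A) m2 ((1 : U.A) ⊗ₜ[Rk k] (1 : U.A)) (twistElt k n p U φ) m

/-- `σ` is the 2-cocycle on `F_ℏ[[GL_n^p]]` obtained by evaluation against the
twist `F_Φ`, i.e. `σ(φ,ψ) = ⟨φ ⊗ ψ, F_Φ⟩`, expressed through ℏ-adic approximation
by the partial sums of the exponential series. -/
def IsTwistEval (Ua : YamaneAlg k n p)
    (m2 : (Ua.A ⊗[Rk k] Ua.A) →ₗ[Rk k] (Ua.A ⊗[Rk k] Ua.A) →ₗ[Rk k] (Ua.A ⊗[Rk k] Ua.A))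
    (FA : Type) [Ring FA] [Algebra (Rk k) FA]
    (B2 : (FA ⊗[Rk k] FA) →ₗ[Rk k] (Ua.A ⊗[Rk k] Ua.A) →ₗ[Rk k] Rk k)
    (φ : ℕ → ℕ → Rk k) (σ : FA →ₗ[Rk k] FA →ₗ[Rk k] Rk k) : Prop :=
  ∀ (f f' : FA) (N : ℕ),
    σ f f' - B2 (f ⊗ₜ[Rk k] f') (twistPartial k n p Ua m2 φ N)
      ∈ adicFil (Rk k) (Rk k) (PowerSeries.X) N

/-! ### PBW monomials and semiclassical limits -/

/-- The ordered monomial `∏ x_{ij}^{e_{ij}}` along the enumeration `l` of the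
index pairs. -/
def monom (A : Type) [Ring A] (x : ℕ → ℕ → A) (l : List (ℕ × ℕ)) (e : (ℕ × ℕ) →₀ ℕ) : A :=
  (l.map fun ij => x ij.1 ij.2 ^ e ij).prod

/-- Exponent patterns of truncated monomials: supported in `I_n × I_n`, with
exponent at most 1 at odd places. -/
def TruncSet : Set ((ℕ × ℕ) →₀ ℕ) :=
  {e | (∀ ij : ℕ × ℕ, e ij ≠ 0 → ij.1 ∈ Finset.Icc 1 n ∧ ij.2 ∈ Finset.Icc 1 n) ∧
       ∀ ij : ℕ × ℕ, pp p ij.1 ij.2 = 1 → e ij ≤ 1}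

/-- `l` enumerates the index set `I_n × I_n` (in some chosen total order). -/
def IsEnum (l : List (ℕ × ℕ)) : Prop :=
  l.Nodup ∧ ∀ ij : ℕ × ℕ, ij ∈ l ↔ (ij.1 ∈ Finset.Icc 1 n ∧ ij.2 ∈ Finset.Icc 1 n)

/-- The relation whose `RingQuot` is the semiclassical limit `A/ℏA`. -/
def modh (A : Type) [Ring A] [Algebra (Rk k) A] : A → A → Prop :=
  fun a b => b = 0 ∧ ∃ y : A, a = (PowerSeries.X : Rk k) • y

/-- The classical formal function superalgebra `F[[GL_n^p]] = U(gl_n^p)^*`: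
the supercommutative formal series superalgebra over `k` on the matrix
coordinates `x_{ij}`, with its standard superbialgebra structure. -/
structure ClassFGL where
  A : Type
  [ringA : Ring A]
  [algA : Algebra k A]
  g : ZMod 2 → Submodule k A
  x : ℕ → ℕ → A
  parx : ∀ i ∈ Finset.Icc 1 n, ∀ j ∈ Finset.Icc 1 n, x i j ∈ g (pp p i j)
  sq : ∀ i ∈ Finset.Icc 1 n, ∀ j ∈ Finset.Icc 1 n, pp p i j = 1 → x i j ^ 2 = 0
  scomm : ∀ i ∈ Finset.Icc 1 n, ∀ h ∈ Finset.Icc 1 n, ∀ j ∈ Finset.Icc 1 n,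
    ∀ k' ∈ Finset.Icc 1 n,
    x i j * x h k' = sg k (pp p i j * pp p h k') • (x h k' * x i j)
  m2 : (A ⊗[k] A) →ₗ[k] (A ⊗[k] A) →ₗ[k] (A ⊗[k] A)
  cop : A →ₗ[k] A ⊗[k] A
  cou : A →ₗ[k] k
  bialg : IsSuperBialg k A g m2 cop cou
  copx : ∀ i ∈ Finset.Icc 1 n, ∀ j ∈ Finset.Icc 1 n,
    cop (x i j) = ∑ a ∈ Finset.Icc 1 n, sg k (pp p i a * pp p a j) • (x i a ⊗ₜ[k] x a j)
  coux : ∀ i ∈ Finset.Icc 1 n, ∀ j ∈ Finset.Icc 1 n, cou (x i j) = if i = j then 1 else 0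
  complete : CompleteWRT k A
    (fun N => (tsi k A {a : A | ∃ i ∈ Finset.Icc 1 n, ∃ j ∈ Finset.Icc 1 n,
        a = x i j - (if i = j then (1 : A) else 0)}) ^ N)
  topgen : TopGenBy k A
    (fun N => (tsi k A {a : A | ∃ i ∈ Finset.Icc 1 n, ∃ j ∈ Finset.Icc 1 n,
        a = x i j - (if i = j then (1 : A) else 0)}) ^ N)
    {a : A | ∃ i ∈ Finset.Icc 1 n, ∃ j ∈ Finset.Icc 1 n, a = x i j}
  univ : ∀ (B : Type) [Ring B] [Algebra k B] (y : ℕ → ℕ → B),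
    (∀ i ∈ Finset.Icc 1 n, ∀ j ∈ Finset.Icc 1 n, pp p i j = 1 → y i j ^ 2 = 0) →
    (∀ i ∈ Finset.Icc 1 n, ∀ h ∈ Finset.Icc 1 n, ∀ j ∈ Finset.Icc 1 n,
      ∀ k' ∈ Finset.Icc 1 n,
      y i j * y h k' = sg k (pp p i j * pp p h k') • (y h k' * y i j)) →
    CompleteWRT k B
      (fun N => (tsi k B {a : B | ∃ i ∈ Finset.Icc 1 n, ∃ j ∈ Finset.Icc 1 n,
          a = y i j - (if i = j then (1 : B) else 0)}) ^ N) →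
    ∃ ψ : A →ₐ[k] B, ∀ i ∈ Finset.Icc 1 n, ∀ j ∈ Finset.Icc 1 n, ψ (x i j) = y i j

attribute [instance] ClassFGL.ringA ClassFGL.algA

end Formal

end QGLS

namespace QGLS

/-! ## Polynomial versions: rational and integral QUESAs and QFSAs -/

section GenericMat

variable (S : Type) [CommRing S] (n : ℕ) (p : ℕ → ZMod 2)

section MatRels
variable (A : Type) [Ring A] [Algebra S A]

/-- The relations of a (multiparametric) quantum matrix function superalgebra,
with coefficient data: `qi s` is `q_s`, `qiInv s` is `q_s⁻¹`, `qph r s` is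
`q_{r,s}` and `qphI r s` is `q_{r,s}⁻¹` (all equal to `1` in the uniparametric
case). -/
structure FMatRels (qi qiInv : ℕ → S) (qph qphI : ℕ → ℕ → S) (x : ℕ → ℕ → A) :
    Prop where
  sq : ∀ i ∈ Finset.Icc 1 n, ∀ j ∈ Finset.Icc 1 n, pp p i j = 1 → x i j ^ 2 = 0
  row : ∀ i ∈ Finset.Icc 1 n, ∀ j ∈ Finset.Icc 1 n, ∀ k' ∈ Finset.Icc 1 n, j < k' →
    x i j * x i k'
      = (sg S (pp p i j * pp p i k') * qi i * qphI j k') • (x i k' * x i j)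
  col : ∀ i ∈ Finset.Icc 1 n, ∀ h ∈ Finset.Icc 1 n, ∀ j ∈ Finset.Icc 1 n, i < h →
    x i j * x h j
      = (sg S (pp p i j * pp p h j) * qi j * qph i h) • (x h j * x i j)
  anti : ∀ i ∈ Finset.Icc 1 n, ∀ h ∈ Finset.Icc 1 n, ∀ j ∈ Finset.Icc 1 n,
    ∀ k' ∈ Finset.Icc 1 n, i < h → k' < j →
    x i j * x h k'
      = (sg S (pp p i j * pp p h k') * qph i h * qphI j k') • (x h k' * x i j)
  syn : ∀ i ∈ Finset.Icc 1 n, ∀ h ∈ Finset.Icc 1 n, ∀ j ∈ Finset.Icc 1 n,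
    ∀ k' ∈ Finset.Icc 1 n, i < h → j < k' →
    x i j * x h k'
      = (sg S (pp p i j * pp p h k') * qph i h * qphI j k') • (x h k' * x i j)
        + (sg S (pp p i j * pp p i k') * (qi i - qiInv i) * qphI j k') • (x i k' * x h j)

end MatRels

/-- A (multiparametric) quantum matrix function superbialgebra over `S`, with
coefficient data `qi, qiInv, qph, qphI`:  generated by the `x_{ij}` subject to
the relations `FMatRels`, with the matrix coproduct and counit, and universal
among such `S`-superalgebras. -/
structure FMatAlg (qi qiInv : ℕ → S) (qph qphI : ℕ → ℕ → S) where
  A : Type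
  [ringA : Ring A]
  [algA : Algebra S A]
  g : ZMod 2 → Submodule S A
  x : ℕ → ℕ → A
  parx : ∀ i ∈ Finset.Icc 1 n, ∀ j ∈ Finset.Icc 1 n, x i j ∈ g (pp p i j)
  rels : FMatRels S n p A qi qiInv qph qphI x
  m2 : (A ⊗[S] A) →ₗ[S] (A ⊗[S] A) →ₗ[S] (A ⊗[S] A)
  cop : A →ₗ[S] A ⊗[S] A
  cou : A →ₗ[S] S
  bialg : IsSuperBialg S A g m2 cop cou
  copx : ∀ i ∈ Finset.Icc 1 n, ∀ j ∈ Finset.Icc 1 n,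
    cop (x i j) = ∑ a ∈ Finset.Icc 1 n, sg S (pp p i a * pp p a j) • (x i a ⊗ₜ[S] x a j)
  coux : ∀ i ∈ Finset.Icc 1 n, ∀ j ∈ Finset.Icc 1 n, cou (x i j) = if i = j then 1 else 0
  gen : Algebra.adjoin S
    {a : A | ∃ i ∈ Finset.Icc 1 n, ∃ j ∈ Finset.Icc 1 n, a = x i j} = ⊤
  univ : ∀ (B : Type) [Ring B] [Algebra S B] (y : ℕ → ℕ → B),
    FMatRels S n p B qi qiInv qph qphI y →
    ∃ ψ : A →ₐ[S] B, ∀ i ∈ Finset.Icc 1 n, ∀ j ∈ Finset.Icc 1 n, ψ (x i j) = y i j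

attribute [instance] FMatAlg.ringA FMatAlg.algA

end GenericMat

section Poly

variable (k : Type) [Field k] [CharZero k]

/-- The base field `k(q)` of rational functions. -/
abbrev Kq := RatFunc k

/-- The base ring `k[q, q⁻¹]` of Laurent polynomials. -/
abbrev Lk := LaurentPolynomial k

/-- The embedding `k[q,q⁻¹] → k(q)`, `q ↦ X`. -/
def laurentToRat : LaurentPolynomial k →ₐ[k] RatFunc k :=
  (AddMonoidAlgebra.lift k (RatFunc k) ℤ)
    ((Units.coeHom (RatFunc k)).comp
      ((zpowersHom (RatFunc k)ˣ) (Units.mk0 RatFunc.X RatFunc.X_ne_zero)))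

/-- `q_s := q^{(−1)^{p(s)}}` in `k(q)`. -/
def qpol (p : ℕ → ZMod 2) (s : ℕ) : Kq k := if p s = 0 then RatFunc.X else (RatFunc.X)⁻¹

/-- `q_s⁻¹` in `k(q)`. -/
def qpolInv (p : ℕ → ZMod 2) (s : ℕ) : Kq k := if p s = 0 then (RatFunc.X)⁻¹ else RatFunc.X

/-- `q_s := q^{(−1)^{p(s)}}` in `k[q,q⁻¹]`. -/
def qLau (p : ℕ → ZMod 2) (s : ℕ) : Lk k :=
  if p s = 0 then LaurentPolynomial.T 1 else LaurentPolynomial.T (-1)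

/-- `q_s⁻¹` in `k[q,q⁻¹]`. -/
def qLauInv (p : ℕ → ZMod 2) (s : ℕ) : Lk k :=
  if p s = 0 then LaurentPolynomial.T (-1) else LaurentPolynomial.T 1

variable (n : ℕ) (p : ℕ → ZMod 2)

section UqDefs
variable (A : Type) [Ring A] [Algebra (Kq k) A]

/-- `K_i^{+1} := L_i^{(−1)^{p(i)}} L_{i+1}^{(−1)^{p(i+1)}}`. -/
def Kp (L Linv : ℕ → A) (i : ℕ) : A :=
  (if p i = 0 then L i else Linv i) * (if p (i + 1) = 0 then L (i + 1) else Linv (i + 1))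

/-- `K_i^{−1}`. -/
def Km (L Linv : ℕ → A) (i : ℕ) : A :=
  (if p i = 0 then Linv i else L i) * (if p (i + 1) = 0 then Linv (i + 1) else L (i + 1))

/-- The defining relations (4.1)–(4.7) of the rational QUESA `U_q(gl_n^p)`. -/
structure UqRels (E L Linv F : ℕ → A) : Prop where
  relLL : ∀ k' ∈ Finset.Icc 1 n, ∀ l ∈ Finset.Icc 1 n, L k' * L l = L l * L k'
  relLinv : ∀ k' ∈ Finset.Icc 1 n, L k' * Linv k' = 1 ∧ Linv k' * L k' = 1
  relLE : ∀ k' ∈ Finset.Icc 1 n, ∀ j ∈ Finset.Icc 1 (n - 1),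
    L k' * E j * Linv k'
      = ((RatFunc.X : Kq k)
          ^ (((if k' = j then 1 else 0) - (if k' = j + 1 then 1 else 0)) : ℤ)) • E j
  relLF : ∀ k' ∈ Finset.Icc 1 n, ∀ j ∈ Finset.Icc 1 (n - 1),
    L k' * F j * Linv k'
      = ((RatFunc.X : Kq k)
          ^ (((if k' = j + 1 then 1 else 0) - (if k' = j then 1 else 0)) : ℤ)) • F j
  relEF : ∀ i ∈ Finset.Icc 1 (n - 1), ∀ j ∈ Finset.Icc 1 (n - 1),
    E i * F j - sg (Kq k) (pp p i (i + 1) * pp p j (j + 1)) • (F j * E i)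
      = (if i = j then (qpol k p i - qpolInv k p i)⁻¹ else 0)
          • (Kp p A L Linv i - Km p A L Linv i)
  relSq : ∀ i ∈ Finset.Icc 1 (n - 1), pp p i (i + 1) = 1 → E i ^ 2 = 0 ∧ F i ^ 2 = 0
  relEE : ∀ i ∈ Finset.Icc 1 (n - 1), ∀ j ∈ Finset.Icc 1 (n - 1), (i + 1 < j ∨ j + 1 < i) →
    E i * E j = sg (Kq k) (pp p i (i + 1) * pp p j (j + 1)) • (E j * E i)
  relFF : ∀ i ∈ Finset.Icc 1 (n - 1), ∀ j ∈ Finset.Icc 1 (n - 1), (i + 1 < j ∨ j + 1 < i) →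
    F i * F j = sg (Kq k) (pp p i (i + 1) * pp p j (j + 1)) • (F j * F i)
  relSerreE : ∀ i ∈ Finset.Icc 1 (n - 1), ∀ j ∈ Finset.Icc 1 (n - 1),
    pp p i (i + 1) = 0 → (j = i + 1 ∨ i = j + 1) →
    E i ^ 2 * E j - ((RatFunc.X : Kq k) + (RatFunc.X)⁻¹) • (E i * E j * E i)
      + E j * E i ^ 2 = 0
  relSerreF : ∀ i ∈ Finset.Icc 1 (n - 1), ∀ j ∈ Finset.Icc 1 (n - 1),
    pp p i (i + 1) = 0 → (j = i + 1 ∨ i = j + 1) →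
    F i ^ 2 * F j - ((RatFunc.X : Kq k) + (RatFunc.X)⁻¹) • (F i * F j * F i)
      + F j * F i ^ 2 = 0
  relHighE : ∀ i : ℕ, 1 ≤ i → i + 2 ≤ n - 1 → pp p (i + 1) (i + 2) = 1 →
    let a := E i
    let b := E (i + 1)
    let c := E (i + 2)
    let pa := pp p i (i + 1)
    let pb := pp p (i + 1) (i + 2)
    let pc := pp p (i + 2) (i + 3)
    let X1 := a * b - (qpol k p (i + 1) * sg (Kq k) (pa * pb)) • (b * a)
    let X2 := X1 * c - (qpol k p (i + 2) * sg (Kq k) ((pa + pb) * pc)) • (c * X1)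
    X2 * b - sg (Kq k) ((pa + pb + pc) * pb) • (b * X2) = 0
  relHighF : ∀ i : ℕ, 1 ≤ i → i + 2 ≤ n - 1 → pp p (i + 1) (i + 2) = 1 →
    let a := F i
    let b := F (i + 1)
    let c := F (i + 2)
    let pa := pp p i (i + 1)
    let pb := pp p (i + 1) (i + 2)
    let pc := pp p (i + 2) (i + 3)
    let X1 := a * b - (qpol k p (i + 1) * sg (Kq k) (pa * pb)) • (b * a)
    let X2 := X1 * c - (qpol k p (i + 2) * sg (Kq k) ((pa + pb) * pc)) • (c * X1)
    X2 * b - sg (Kq k) ((pa + pb + pc) * pb) • (b * X2) = 0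

end UqDefs

/-- The rational QUESA `U_q(gl_n^p)`: the `k(q)`-superalgebra presented by the
generators `E_i, L_k^{±1}, F_i` and relations (4.1)–(4.7). -/
structure UqAlg where
  A : Type
  [ringA : Ring A]
  [algA : Algebra (Kq k) A]
  [algk : Algebra k A]
  [tower : IsScalarTower k (Kq k) A]
  g : ZMod 2 → Submodule (Kq k) A
  grading : SuperGrading (Kq k) A g
  E : ℕ → A
  L : ℕ → A
  Linv : ℕ → A
  F : ℕ → A
  parE : ∀ i ∈ Finset.Icc 1 (n - 1), E i ∈ g (pp p i (i + 1))
  parL : ∀ s ∈ Finset.Icc 1 n, L s ∈ g 0 ∧ Linv s ∈ g 0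
  parF : ∀ i ∈ Finset.Icc 1 (n - 1), F i ∈ g (pp p i (i + 1))
  rels : UqRels k n p A E L Linv F
  gen : Algebra.adjoin (Kq k)
    ({a : A | ∃ i ∈ Finset.Icc 1 (n - 1), a = E i}
      ∪ {a : A | ∃ s ∈ Finset.Icc 1 n, a = L s}
      ∪ {a : A | ∃ s ∈ Finset.Icc 1 n, a = Linv s}
      ∪ {a : A | ∃ i ∈ Finset.Icc 1 (n - 1), a = F i}) = ⊤
  univ : ∀ (B : Type) [Ring B] [Algebra (Kq k) B] (E' L' Linv' F' : ℕ → B),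
    UqRels k n p B E' L' Linv' F' →
    ∃ ψ : A →ₐ[Kq k] B,
      (∀ i ∈ Finset.Icc 1 (n - 1), ψ (E i) = E' i) ∧
      (∀ s ∈ Finset.Icc 1 n, ψ (L s) = L' s ∧ ψ (Linv s) = Linv' s) ∧
      (∀ i ∈ Finset.Icc 1 (n - 1), ψ (F i) = F' i)

attribute [instance] UqAlg.ringA UqAlg.algA UqAlg.algk UqAlg.tower

/-- The formulas of Theorem 4.2 for the Hopf structure of `U_q(gl_n^p)` on the
generators. -/
def UqHopfFormulas (U : UqAlg k n p)
    (cop : U.A →ₗ[Kq k] U.A ⊗[Kq k] U.A) (cou : U.A →ₗ[Kq k] Kq k)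
    (St : U.A →ₗ[Kq k] U.A) : Prop :=
  (∀ i ∈ Finset.Icc 1 (n - 1),
      cop (U.E i)
        = U.E i ⊗ₜ[Kq k] (1 : U.A) + Kp p U.A U.L U.Linv i ⊗ₜ[Kq k] U.E i
    ∧ St (U.E i) = -(Km p U.A U.L U.Linv i * U.E i)
    ∧ cou (U.E i) = 0) ∧
  (∀ s ∈ Finset.Icc 1 n,
      cop (U.L s) = U.L s ⊗ₜ[Kq k] U.L s
    ∧ cop (U.Linv s) = U.Linv s ⊗ₜ[Kq k] U.Linv s
    ∧ St (U.L s) = U.Linv s ∧ St (U.Linv s) = U.L s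
    ∧ cou (U.L s) = 1 ∧ cou (U.Linv s) = 1) ∧
  (∀ i ∈ Finset.Icc 1 (n - 1),
      cop (U.F i)
        = U.F i ⊗ₜ[Kq k] Km p U.A U.L U.Linv i + (1 : U.A) ⊗ₜ[Kq k] U.F i
    ∧ St (U.F i) = -(U.F i * Kp p U.A U.L U.Linv i)
    ∧ cou (U.F i) = 0)

/-- The rational QUESA with its Hopf superalgebra structure (Theorem 4.2). -/
structure UqHopf extends UqAlg k n p where
  m2 : (A ⊗[Kq k] A) →ₗ[Kq k] (A ⊗[Kq k] A) →ₗ[Kq k] (A ⊗[Kq k] A)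
  cop : A →ₗ[Kq k] A ⊗[Kq k] A
  cou : A →ₗ[Kq k] Kq k
  ant : A →ₗ[Kq k] A
  bialg : IsSuperBialg (Kq k) A g m2 cop cou
  antipode : IsAntipode (Kq k) A cop cou ant
  formulas : UqHopfFormulas k n p toUqAlg cop cou ant

/-- The elements `Θ_i` of Definition 4.3. -/
def Theta (U : UqAlg k n p) (i : ℕ) : U.A :=
  ((qpol k p i - qpolInv k p i)⁻¹ : Kq k) •
    ((if p i = 0 then U.L i else U.Linv i)
        * (if p (i + 1) = 0 then U.Linv (i + 1) else U.L (i + 1))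
      - (if p i = 0 then U.Linv i else U.L i)
        * (if p (i + 1) = 0 then U.L (i + 1) else U.Linv (i + 1)))

/-- The set of generators of the integral form `U_q^int(gl_n^p)`. -/
def UqIntSet (U : UqAlg k n p) : Set U.A :=
  {a : U.A | ∃ i ∈ Finset.Icc 1 (n - 1), a = U.E i}
    ∪ {a : U.A | ∃ s ∈ Finset.Icc 1 n, a = U.L s}
    ∪ {a : U.A | ∃ s ∈ Finset.Icc 1 n, a = U.Linv s}
    ∪ {a : U.A | ∃ i ∈ Finset.Icc 1 (n - 1), a = Theta k n p U i}
    ∪ {a : U.A | ∃ i ∈ Finset.Icc 1 (n - 1), a = U.F i}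

/-- The integral form `U_q^int(gl_n^p)`: the `k[q,q⁻¹]`-subsuperalgebra of
`U_q(gl_n^p)` generated by the `E_i, L_k^{±1}, Θ_i, F_i` (realized as the
`k`-subalgebra generated by these elements together with `q^{±1}·1`). -/
def UqInt (U : UqAlg k n p) : Subalgebra k U.A :=
  Algebra.adjoin k (UqIntSet k n p U
    ∪ {algebraMap (Kq k) U.A RatFunc.X, algebraMap (Kq k) U.A (RatFunc.X)⁻¹})

end Poly

end QGLS

namespace QGLS

set_option linter.unusedSectionVars false
set_option linter.unusedVariables false
set_option maxHeartbeats 1000000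
set_option synthInstance.maxHeartbeats 400000

section Aux

variable {k : Type} [Field k] [CharZero k] {n : ℕ} {p : ℕ → ZMod 2}

/-- abbreviation for the target coefficient subalgebra -/
abbrev LkAdj (k : Type) [Field k] [CharZero k] : Subalgebra k (Kq k) :=
  Algebra.adjoin k ({RatFunc.X, (RatFunc.X)⁻¹} : Set (Kq k))

lemma zmod2_cases (e : ZMod 2) : e = 0 ∨ e = 1 := by revert e; decide

lemma sg_zero : sg (Kq k) 0 = 1 := by simp [sg]

lemma sg_cases (e : ZMod 2) : sg (Kq k) e = 1 ∨ sg (Kq k) e = -1 := by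
  rcases zmod2_cases e with h | h <;> simp [sg, h]

lemma qz_mem_LkAdj (z : ℤ) : (RatFunc.X ^ z : Kq k) ∈ LkAdj k := by
  have hX : (RatFunc.X : Kq k) ∈ LkAdj k :=
    Algebra.subset_adjoin (by simp)
  have hXi : ((RatFunc.X)⁻¹ : Kq k) ∈ LkAdj k :=
    Algebra.subset_adjoin (by simp)
  rcases z with m | m
  · simpa [zpow_natCast] using pow_mem hX m
  · rw [zpow_negSucc, ← inv_pow]
    exact pow_mem hXi (m + 1)

variable (U : UqHopf k n p)

local notation "Uq" => UqInt k n p U.toUqAlg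

lemma smul_one_mul (c : Kq k) (a : U.A) : (c • (1 : U.A)) * a = c • a := by
  rw [smul_mul_assoc, one_mul]

lemma c_smul_one_mem {c : Kq k} (hc : c ∈ LkAdj k) : c • (1 : U.A) ∈ Uq := by
  induction hc using Algebra.adjoin_induction with
  | mem x hx =>
    rcases hx with h | h
    · rw [h, ← Algebra.algebraMap_eq_smul_one]
      exact Algebra.subset_adjoin (Or.inr (by simp))
    · rw [Set.mem_singleton_iff.mp h, ← Algebra.algebraMap_eq_smul_one]
      exact Algebra.subset_adjoin (Or.inr (by simp))
  | algebraMap r =>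
    rw [algebraMap_smul]
    exact (UqInt k n p U.toUqAlg).smul_mem (one_mem _) r
  | add x y hx hy ihx ihy => rw [add_smul]; exact add_mem ihx ihy
  | mul x y hx hy ihx ihy =>
    have : (x * y) • (1 : U.A) = (x • (1:U.A)) * (y • (1:U.A)) := by
      rw [smul_mul_assoc, one_mul, mul_smul]
    rw [this]; exact mul_mem ihx ihy

lemma algebraMap_mem_Uq {c : Kq k} (hc : c ∈ LkAdj k) :
    algebraMap (Kq k) U.A c ∈ Uq := by
  rw [Algebra.algebraMap_eq_smul_one]; exact c_smul_one_mem U hc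

lemma c_smul_mem {c : Kq k} (hc : c ∈ LkAdj k) {a : U.A} (ha : a ∈ Uq) :
    c • a ∈ Uq := by
  rw [← smul_one_mul]; exact mul_mem (c_smul_one_mem U hc) ha

lemma qz_smul_mem (z : ℤ) {a : U.A} (ha : a ∈ Uq) :
    (RatFunc.X ^ z : Kq k) • a ∈ Uq := c_smul_mem U (qz_mem_LkAdj z) ha

lemma sg_smul_mem (e : ZMod 2) {a : U.A} (ha : a ∈ Uq) :
    sg (Kq k) e • a ∈ Uq := by
  rcases sg_cases (k := k) e with h | h <;> rw [h]
  · simpa using ha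
  · rw [neg_smul, one_smul]; exact neg_mem ha

end Aux
section Aux2

variable {k : Type} [Field k] [CharZero k] {n : ℕ} {p : ℕ → ZMod 2} (U : UqHopf k n p)

local notation "Uq" => UqInt k n p U.toUqAlg

/-- The set of the `L_s, L_s^{-1}`. -/
def LSet : Set U.A :=
  {a : U.A | ∃ s ∈ Finset.Icc 1 n, a = U.L s ∨ a = U.Linv s}

/-- The submonoid of grouplike monomials in the `L_s^{±1}`. -/
def Grp : Submonoid U.A := Submonoid.closure (LSet U)

lemma grp_facts {G : U.A} (hG : G ∈ Grp U) :
    G ∈ Uq ∧ G ∈ U.g 0 ∧ U.cou G = 1 ∧ U.cop G = G ⊗ₜ[Kq k] G ∧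
      ∃ G', G' ∈ Grp U ∧ G * G' = 1 ∧ G' * G = 1 := by
  induction hG using Submonoid.closure_induction with
  | mem x hx =>
    obtain ⟨s, hs, hx⟩ := hx
    have hf := U.formulas.2.1 s hs
    have hpar := U.parL s hs
    rcases hx with h | h <;> subst h
    · refine ⟨Algebra.subset_adjoin (Or.inl (Or.inl (Or.inl (Or.inl (Or.inr ⟨s, hs, rfl⟩))))),
        hpar.1, hf.2.2.2.2.1, hf.1, U.Linv s, Submonoid.subset_closure ⟨s, hs, Or.inr rfl⟩,
        (U.rels.relLinv s hs).1, (U.rels.relLinv s hs).2⟩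
    · refine ⟨Algebra.subset_adjoin (Or.inl (Or.inl (Or.inl (Or.inr ⟨s, hs, rfl⟩)))),
        hpar.2, hf.2.2.2.2.2, hf.2.1, U.L s, Submonoid.subset_closure ⟨s, hs, Or.inl rfl⟩,
        (U.rels.relLinv s hs).2, (U.rels.relLinv s hs).1⟩
  | one =>
    exact ⟨one_mem _, U.bialg.grading.one_mem, U.bialg.counit_one, U.bialg.comul_one,
      1, one_mem _, one_mul 1, one_mul 1⟩
  | mul x y hx hy ihx ihy =>
    obtain ⟨hxU, hxg, hxc, hxcop, x', hx'G, hxx', hx'x⟩ := ihx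
    obtain ⟨hyU, hyg, hyc, hycop, y', hy'G, hyy', hy'y⟩ := ihy
    refine ⟨mul_mem hxU hyU, by simpa using U.bialg.grading.mul_mem hxg hyg,
      by rw [U.bialg.counit_mul, hxc, hyc, one_mul], ?_, y' * x', mul_mem hy'G hx'G, ?_, ?_⟩
    · rw [U.bialg.comul_mul, hxcop, hycop,
        U.bialg.superMul 0 0 x x y y hxg hyg]
      simp [sg]
    · rw [mul_assoc, ← mul_assoc y, hyy', one_mul, hxx']
    · rw [mul_assoc, ← mul_assoc x', hx'x, one_mul, hy'y]

lemma grp_ant {G : U.A} (hG : G ∈ Grp U) : U.ant G ∈ Uq := by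
  obtain ⟨hGU, hGg, hGc, hGcop, G', hG'G, hGG', hG'Gm⟩ := grp_facts U hG
  have h1 := U.antipode.1 G
  rw [hGcop] at h1
  rw [TensorProduct.map_tmul, LinearMap.mul'_apply, LinearMap.id_coe, id_eq, hGc, map_one] at h1
  -- h1 : U.ant G * G = 1
  have : U.ant G = G' := by
    calc U.ant G = U.ant G * (G * G') := by rw [hGG', mul_one]
    _ = (U.ant G * G) * G' := by rw [mul_assoc]
    _ = G' := by rw [h1, one_mul]
  rw [this]
  exact (grp_facts U hG'G).1

end Aux2
section Aux3

variable {k : Type} [Field k] [CharZero k] {n : ℕ} {p : ℕ → ZMod 2} (U : UqHopf k n p)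

local notation "Uq" => UqInt k n p U.toUqAlg

lemma Icc_lift {i : ℕ} (hi : i ∈ Finset.Icc 1 (n - 1)) :
    i ∈ Finset.Icc 1 n ∧ i + 1 ∈ Finset.Icc 1 n := by
  rw [Finset.mem_Icc] at hi ⊢
  rw [Finset.mem_Icc]
  omega

lemma Kp_mem_Grp {i : ℕ} (hi : i ∈ Finset.Icc 1 (n - 1)) :
    Kp p U.A U.L U.Linv i ∈ Grp U := by
  obtain ⟨h1, h2⟩ := Icc_lift hi
  unfold Kp
  refine mul_mem (Submonoid.subset_closure ⟨i, h1, ?_⟩)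
    (Submonoid.subset_closure ⟨i + 1, h2, ?_⟩) <;> split <;> simp

lemma Km_mem_Grp {i : ℕ} (hi : i ∈ Finset.Icc 1 (n - 1)) :
    Km p U.A U.L U.Linv i ∈ Grp U := by
  obtain ⟨h1, h2⟩ := Icc_lift hi
  unfold Km
  refine mul_mem (Submonoid.subset_closure ⟨i, h1, ?_⟩)
    (Submonoid.subset_closure ⟨i + 1, h2, ?_⟩) <;> split <;> simp

/-- The non-grouplike generators of the integral form, with their parities. -/
def XGen (x : U.A) (e : ZMod 2) : Prop :=
  (∃ i ∈ Finset.Icc 1 (n - 1), x = U.E i ∧ e = pp p i (i + 1)) ∨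
  (∃ i ∈ Finset.Icc 1 (n - 1), x = U.F i ∧ e = pp p i (i + 1)) ∨
  (∃ i ∈ Finset.Icc 1 (n - 1), x = Theta k n p U.toUqAlg i ∧ e = 0)

lemma xgen_facts {x : U.A} {e : ZMod 2} (hx : XGen U x e) :
    x ∈ Uq ∧ x ∈ U.g e ∧ U.cou x = 0 ∧
      ∃ bx cx, bx ∈ Grp U ∧ cx ∈ Grp U ∧
        U.cop x = x ⊗ₜ[Kq k] cx + bx ⊗ₜ[Kq k] x := by
  rcases hx with ⟨i, hi, hxE, he⟩ | ⟨i, hi, hxF, he⟩ | ⟨i, hi, hxT, he⟩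
  · subst hxE he
    have hf := U.formulas.1 i hi
    refine ⟨Algebra.subset_adjoin (Or.inl (Or.inl (Or.inl (Or.inl (Or.inl ⟨i, hi, rfl⟩))))),
      U.parE i hi, hf.2.2, Kp p U.A U.L U.Linv i, 1, Kp_mem_Grp U hi, one_mem _,
      by rw [hf.1]⟩
  · subst hxF he
    have hf := U.formulas.2.2 i hi
    exact ⟨Algebra.subset_adjoin (Or.inl (Or.inr ⟨i, hi, rfl⟩)),
      U.parF i hi, hf.2.2, 1, Km p U.A U.L U.Linv i, one_mem _, Km_mem_Grp U hi,
      by rw [hf.1]⟩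
  · subst hxT he
    obtain ⟨h1, h2⟩ := Icc_lift hi
    set c : Kq k := ((qpol k p i - qpolInv k p i)⁻¹ : Kq k) with hc
    set P1 : U.A := (if p i = 0 then U.L i else U.Linv i)
        * (if p (i + 1) = 0 then U.Linv (i + 1) else U.L (i + 1)) with hP1
    set P2 : U.A := (if p i = 0 then U.Linv i else U.L i)
        * (if p (i + 1) = 0 then U.L (i + 1) else U.Linv (i + 1)) with hP2
    have hP1G : P1 ∈ Grp U := by
      refine mul_mem (Submonoid.subset_closure ⟨i, h1, ?_⟩)
        (Submonoid.subset_closure ⟨i + 1, h2, ?_⟩) <;> split <;> simp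
    have hP2G : P2 ∈ Grp U := by
      refine mul_mem (Submonoid.subset_closure ⟨i, h1, ?_⟩)
        (Submonoid.subset_closure ⟨i + 1, h2, ?_⟩) <;> split <;> simp
    have hT : Theta k n p U.toUqAlg i = c • (P1 - P2) := rfl
    obtain ⟨hP1U, hP1g, hP1c, hP1cop, -⟩ := grp_facts U hP1G
    obtain ⟨hP2U, hP2g, hP2c, hP2cop, -⟩ := grp_facts U hP2G
    refine ⟨Algebra.subset_adjoin (Or.inl (Or.inl (Or.inr ⟨i, hi, rfl⟩))),
      ?_, ?_, P1, P2, hP1G, hP2G, ?_⟩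
    · rw [hT]
      exact Submodule.smul_mem _ _ (sub_mem hP1g hP2g)
    · rw [hT, LinearMap.map_smul, map_sub, hP1c, hP2c, sub_self, smul_zero]
    · rw [hT, LinearMap.map_smul, map_sub, hP1cop, hP2cop]
      simp only [smul_sub, TensorProduct.smul_tmul', TensorProduct.sub_tmul,
        TensorProduct.tmul_smul, TensorProduct.tmul_sub]
      abel

end Aux3
section Aux4

variable {k : Type} [Field k] [CharZero k] {n : ℕ} {p : ℕ → ZMod 2}

/-- Monomials of the integral form, stratified by the number of non-grouplike
letters. -/
inductive W (U : UqHopf k n p) : ℕ → U.A → ZMod 2 → Prop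
  | grp {G : U.A} (hG : G ∈ Grp U) : W U 0 G 0
  | scal {m : ℕ} {w : U.A} {pw : ZMod 2} (z : ℤ) (h : W U m w pw) :
      W U m ((RatFunc.X ^ z : Kq k) • w) pw
  | ext {m : ℕ} {u : U.A} {pu : ZMod 2} (h : W U m u pu) {x : U.A} {e : ZMod 2}
      (hx : XGen U x e) {G : U.A} (hG : G ∈ Grp U) :
      W U (m + 1) (u * (x * G)) (pu + e)

variable (U : UqHopf k n p)

local notation "Uq" => UqInt k n p U.toUqAlg

lemma W_grp_mul {m : ℕ} {w : U.A} {pw : ZMod 2} (h : W U m w pw)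
    {G : U.A} (hG : G ∈ Grp U) : W U m (w * G) pw := by
  induction h with
  | grp hG' => exact W.grp (mul_mem hG' hG)
  | scal z h ih =>
    rw [smul_mul_assoc]
    exact W.scal z ih
  | ext h hx hG' ih =>
    rw [mul_assoc, mul_assoc]
    exact W.ext h hx (mul_mem hG' hG)

lemma W_mul {m m' : ℕ} {w w' : U.A} {pw pw' : ZMod 2}
    (h : W U m w pw) (h' : W U m' w' pw') : W U (m + m') (w * w') (pw + pw') := by
  induction h' generalizing m w pw with
  | grp hG =>
    simpa using W_grp_mul U h hG
  | scal z h' ih =>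
    rw [mul_smul_comm]
    exact W.scal z (ih h)
  | @ext m'' u pu h' x e hx G hG ih =>
    rw [← mul_assoc, ← add_assoc, ← add_assoc]
    exact W.ext (ih h) hx hG

lemma W_one : W U 0 (1 : U.A) 0 := W.grp (one_mem _)

end Aux4
section Aux5

variable {k : Type} [Field k] [CharZero k] {n : ℕ} {p : ℕ → ZMod 2} (U : UqHopf k n p)

local notation "Uq" => UqInt k n p U.toUqAlg

/-- The subgroup of `A ⊗ A` spanned by tensors whose first leg is a monomial of
rank `< m` and whose second leg is homogeneous and integral. -/
def DD (m : ℕ) : AddSubgroup (U.A ⊗[Kq k] U.A) :=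
  AddSubgroup.closure {t | ∃ r, r < m ∧ ∃ b pb c pc,
    W U r b pb ∧ c ∈ Uq ∧ c ∈ U.g pc ∧ t = b ⊗ₜ[Kq k] c}

lemma DD_smul_mem {c : Kq k} (hc : ∀ {a : U.A}, a ∈ Uq → c • a ∈ Uq)
    {m : ℕ} {t : U.A ⊗[Kq k] U.A} (ht : t ∈ DD U m) : c • t ∈ DD U m := by
  induction ht using AddSubgroup.closure_induction with
  | mem t' ht' =>
    obtain ⟨r, hr, b, pb, c', pc, hbW, hcU, hcg, rfl⟩ := ht'
    rw [← TensorProduct.tmul_smul]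
    exact AddSubgroup.subset_closure
      ⟨r, hr, b, pb, c • c', pc, hbW, hc hcU, Submodule.smul_mem _ _ hcg, rfl⟩
  | zero => rw [smul_zero]; exact zero_mem _
  | add a b ha hb iha ihb => rw [smul_add]; exact add_mem iha ihb
  | neg a ha iha => rw [smul_neg]; exact neg_mem iha

/-- An invertible element of the integral form of degree `0`. -/
def GUnit (γ : U.A) : Prop :=
  γ ∈ Uq ∧ γ ∈ U.g 0 ∧ ∃ γ', γ' ∈ Uq ∧ γ * γ' = 1 ∧ γ' * γ = 1

lemma gunit_grp {G : U.A} (hG : G ∈ Grp U) : GUnit U G := by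
  obtain ⟨h1, h2, -, -, G', hG', h3, h4⟩ := grp_facts U hG
  exact ⟨h1, h2, G', (grp_facts U hG').1, h3, h4⟩

lemma gunit_mul_grp {γ : U.A} (h : GUnit U γ) {G : U.A} (hG : G ∈ Grp U) :
    GUnit U (γ * G) := by
  obtain ⟨h1, h2, γ', h3, h4, h5⟩ := h
  obtain ⟨g1, g2, G', hG', g4, g5⟩ := gunit_grp U hG
  refine ⟨mul_mem h1 g1, by simpa using U.bialg.grading.mul_mem h2 g2,
    G' * γ', mul_mem hG' h3, ?_, ?_⟩
  · rw [mul_assoc, ← mul_assoc G, g4, one_mul, h4]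
  · rw [mul_assoc, ← mul_assoc γ', h5, one_mul, g5]

lemma gunit_qz_smul (z : ℤ) {γ : U.A} (h : GUnit U γ) :
    GUnit U ((RatFunc.X ^ z : Kq k) • γ) := by
  obtain ⟨h1, h2, γ', h3, h4, h5⟩ := h
  have hXz : (RatFunc.X ^ z : Kq k) * (RatFunc.X ^ (-z) : Kq k) = 1 := by
    rw [← zpow_add₀ (RatFunc.X_ne_zero), add_neg_cancel, zpow_zero]
  have hXz' : (RatFunc.X ^ (-z) : Kq k) * (RatFunc.X ^ z : Kq k) = 1 := by
    rw [← zpow_add₀ (RatFunc.X_ne_zero), neg_add_cancel, zpow_zero]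
  refine ⟨qz_smul_mem U z h1, Submodule.smul_mem _ _ h2,
    (RatFunc.X ^ (-z) : Kq k) • γ', qz_smul_mem U (-z) h3, ?_, ?_⟩
  · rw [smul_mul_smul_comm, h4, hXz, one_smul]
  · rw [smul_mul_smul_comm, h5, hXz', one_smul]

lemma lemA {m : ℕ} {w : U.A} {pw : ZMod 2} (h : W U m w pw) :
    w ∈ Uq ∧ w ∈ U.g pw ∧ U.cou w ∈ LkAdj k ∧
      ∃ γ, GUnit U γ ∧ U.cop w - w ⊗ₜ[Kq k] γ ∈ DD U m := by
  induction h with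
  | grp hG =>
    obtain ⟨h1, h2, h3, h4, -⟩ := grp_facts U hG
    exact ⟨h1, h2, by rw [h3]; exact one_mem _, _, gunit_grp U hG,
      by rw [h4, sub_self]; exact zero_mem _⟩
  | @scal m w pw z h ih =>
    obtain ⟨h1, h2, h3, γ, hγ, hR⟩ := ih
    refine ⟨qz_smul_mem U z h1, Submodule.smul_mem _ _ h2, ?_, γ, hγ, ?_⟩
    · rw [LinearMap.map_smul, smul_eq_mul]
      exact mul_mem (qz_mem_LkAdj z) h3
    · rw [LinearMap.map_smul, ← TensorProduct.smul_tmul', ← smul_sub]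
      exact DD_smul_mem U (fun ha => qz_smul_mem U z ha) hR
  | @ext m u pu h x e hx G hG ih =>
    obtain ⟨huU, hug, hucou, γ, hγ, hR⟩ := ih
    obtain ⟨hγU, hγg, γ', hγ'U, hγγ', hγ'γ⟩ := hγ
    obtain ⟨hxU, hxg, hxcou, bx, cx, hbxG, hcxG, hcopx⟩ := xgen_facts U hx
    obtain ⟨hGU, hGg, hGcou, hGcop, -⟩ := grp_facts U hG
    obtain ⟨hbxU, hbxg, -, -, -⟩ := grp_facts U hbxG
    obtain ⟨hcxU, hcxg, -, -, -⟩ := grp_facts U hcxG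
    have hxGU : x * G ∈ Uq := mul_mem hxU hGU
    have hxGg : x * G ∈ U.g e := by simpa using U.bialg.grading.mul_mem hxg hGg
    have hbxGU : bx * G ∈ Uq := mul_mem hbxU hGU
    have hbxGg : bx * G ∈ U.g 0 := by simpa using U.bialg.grading.mul_mem hbxg hGg
    have hcxGU : cx * G ∈ Uq := mul_mem hcxU hGU
    have hcxGg : cx * G ∈ U.g 0 := by simpa using U.bialg.grading.mul_mem hcxg hGg
    refine ⟨mul_mem huU hxGU, U.bialg.grading.mul_mem hug hxGg, ?_, ?_⟩
    · rw [U.bialg.counit_mul, U.bialg.counit_mul, hxcou, zero_mul, mul_zero]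
      exact zero_mem _
    -- the coproduct decomposition
    have hK : U.m2 (U.cop x) (G ⊗ₜ[Kq k] G)
        = (x * G) ⊗ₜ[Kq k] (cx * G) + (bx * G) ⊗ₜ[Kq k] (x * G) := by
      rw [hcopx, map_add, LinearMap.add_apply,
        U.bialg.superMul 0 0 x cx G G hcxg hGg,
        U.bialg.superMul e 0 bx x G G hxg hGg]
      simp [sg]
    set K : U.A ⊗[Kq k] U.A :=
      (x * G) ⊗ₜ[Kq k] (cx * G) + (bx * G) ⊗ₜ[Kq k] (x * G) with hKdef
    have hm2K : ∀ t ∈ DD U m, U.m2 t K ∈ DD U (m + 1) := by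
      intro t ht
      induction ht using AddSubgroup.closure_induction with
      | mem t' ht' =>
        obtain ⟨r, hr, b, pb, c, pc, hbW, hcU, hcg, rfl⟩ := ht'
        rw [hKdef, map_add, U.bialg.superMul pc e b c (x * G) (cx * G) hcg hxGg,
          U.bialg.superMul pc 0 b c (bx * G) (x * G) hcg hbxGg]
        refine add_mem ?_ ?_
        · have hgen : (b * (x * G)) ⊗ₜ[Kq k] (c * (cx * G)) ∈ DD U (m + 1) :=
            AddSubgroup.subset_closure ⟨r + 1, by omega, b * (x * G), pb + e,
              c * (cx * G), pc, W.ext hbW hx hG, mul_mem hcU hcxGU,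
              by simpa using U.bialg.grading.mul_mem hcg hcxGg, rfl⟩
          rcases sg_cases (k := k) (pc * e) with hs | hs <;> rw [hs]
          · simpa using hgen
          · rw [neg_smul, one_smul]; exact neg_mem hgen
        · have : sg (Kq k) (pc * 0) = 1 := by simp [sg]
          rw [this, one_smul]
          exact AddSubgroup.subset_closure ⟨r, by omega, b * (bx * G), pb,
            c * (x * G), pc + e, W_grp_mul U hbW (mul_mem hbxG hG),
            mul_mem hcU hxGU, U.bialg.grading.mul_mem hcg hxGg, rfl⟩
      | zero => rw [map_zero, LinearMap.zero_apply]; exact zero_mem _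
      | add a b ha hb iha ihb =>
        simp only [map_add, LinearMap.add_apply]; exact add_mem iha ihb
      | neg a ha iha =>
        simp only [map_neg, LinearMap.neg_apply]; exact neg_mem iha
    set R : U.A ⊗[Kq k] U.A := U.cop u - u ⊗ₜ[Kq k] γ with hRdef
    have h1 : U.cop u = u ⊗ₜ[Kq k] γ + R := by rw [hRdef]; abel
    have h2 : U.m2 (U.cop u) K = U.m2 (u ⊗ₜ[Kq k] γ) K + U.m2 R K := by
      conv_lhs => rw [h1]
      rw [map_add U.m2 (u ⊗ₜ[Kq k] γ) R, LinearMap.add_apply]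
    have h3 : U.m2 (u ⊗ₜ[Kq k] γ) K
        = (u * (x * G)) ⊗ₜ[Kq k] (γ * (cx * G))
          + (u * (bx * G)) ⊗ₜ[Kq k] (γ * (x * G)) := by
      rw [hKdef, map_add,
        U.bialg.superMul 0 e u γ (x * G) (cx * G) hγg hxGg,
        U.bialg.superMul 0 0 u γ (bx * G) (x * G) hγg hbxGg]
      have hs1 : sg (Kq k) (0 * e) = 1 := by simp [sg]
      have hs2 : sg (Kq k) ((0 : ZMod 2) * 0) = 1 := by simp [sg]
      rw [hs1, hs2, one_smul, one_smul]
    have hcopw : U.cop (u * (x * G))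
        = (u * (x * G)) ⊗ₜ[Kq k] (γ * (cx * G))
          + ((u * (bx * G)) ⊗ₜ[Kq k] (γ * (x * G)) + U.m2 R K) := by
      rw [U.bialg.comul_mul, U.bialg.comul_mul x G, hGcop, hK, h2, h3]
      abel
    refine ⟨γ * (cx * G), gunit_mul_grp U ⟨hγU, hγg, γ', hγ'U, hγγ', hγ'γ⟩
      (mul_mem hcxG hG), ?_⟩
    rw [hcopw]
    have heq : (u * (x * G)) ⊗ₜ[Kq k] (γ * (cx * G))
        + ((u * (bx * G)) ⊗ₜ[Kq k] (γ * (x * G)) + U.m2 R K)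
        - (u * (x * G)) ⊗ₜ[Kq k] (γ * (cx * G))
        = (u * (bx * G)) ⊗ₜ[Kq k] (γ * (x * G)) + U.m2 R K := by
      abel
    rw [heq]
    refine add_mem ?_ (hm2K _ hR)
    exact AddSubgroup.subset_closure ⟨m, by omega, u * (bx * G), pu,
      γ * (x * G), e, W_grp_mul U h (mul_mem hbxG hG), mul_mem hγU hxGU,
      by simpa using U.bialg.grading.mul_mem hγg hxGg, rfl⟩

end Aux5
section Aux6

variable {k : Type} [Field k] [CharZero k] {n : ℕ} {p : ℕ → ZMod 2} (U : UqHopf k n p)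

local notation "Uq" => UqInt k n p U.toUqAlg

lemma lemB : ∀ (m : ℕ) {w : U.A} {pw : ZMod 2}, W U m w pw → U.ant w ∈ Uq := by
  intro m
  induction m using Nat.strong_induction_on with
  | _ m IH =>
    intro w pw hw
    obtain ⟨hwU, hwg, hwcou, γ, ⟨hγU, hγg, γ', hγ'U, hγγ', hγ'γ⟩, hR⟩ := lemA U hw
    have hJgen : ∀ t ∈ DD U m,
        (LinearMap.mul' (Kq k) U.A)
          ((TensorProduct.map U.ant (LinearMap.id : U.A →ₗ[Kq k] U.A)) t) ∈ Uq := by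
      intro t ht
      induction ht using AddSubgroup.closure_induction with
      | mem t' ht' =>
        obtain ⟨r, hr, b, pb, c, pc, hbW, hcU, hcg, rfl⟩ := ht'
        rw [TensorProduct.map_tmul, LinearMap.mul'_apply]
        simp only [LinearMap.id_coe, id_eq]
        exact mul_mem (IH r (by omega) hbW) hcU
      | zero => rw [map_zero, map_zero]; exact zero_mem _
      | add a b ha hb iha ihb => rw [map_add, map_add]; exact add_mem iha ihb
      | neg a ha iha => rw [map_neg, map_neg]; exact neg_mem iha
    have hid := U.antipode.1 w
    have h1 : U.cop w = w ⊗ₜ[Kq k] γ + (U.cop w - w ⊗ₜ[Kq k] γ) := by abel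
    rw [h1, map_add, map_add, TensorProduct.map_tmul, LinearMap.mul'_apply] at hid
    simp only [LinearMap.id_coe, id_eq] at hid
    set J : U.A := (LinearMap.mul' (Kq k) U.A)
      ((TensorProduct.map U.ant (LinearMap.id : U.A →ₗ[Kq k] U.A))
        (U.cop w - w ⊗ₜ[Kq k] γ)) with hJdef
    have hJ : J ∈ Uq := hJgen _ hR
    have h4 : U.ant w * γ = algebraMap (Kq k) U.A (U.cou w) - J := by
      rw [eq_sub_iff_add_eq]
      exact hid
    have h5 : U.ant w = (algebraMap (Kq k) U.A (U.cou w) - J) * γ' := by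
      calc U.ant w = U.ant w * (γ * γ') := by rw [hγγ', mul_one]
      _ = (U.ant w * γ) * γ' := by rw [mul_assoc]
      _ = _ := by rw [h4]
    rw [h5]
    exact mul_mem (sub_mem (algebraMap_mem_Uq U hwcou) hJ) hγ'U

/-- The `k`-span of all monomials. -/
def VV : Submodule k U.A :=
  Submodule.span k {w : U.A | ∃ m pw, W U m w pw}

lemma VV_one : (1 : U.A) ∈ VV U := Submodule.subset_span ⟨0, 0, W_one U⟩

lemma VV_mul {a b : U.A} (ha : a ∈ VV U) (hb : b ∈ VV U) : a * b ∈ VV U := by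
  induction ha using Submodule.span_induction with
  | mem x hx =>
    induction hb using Submodule.span_induction with
    | mem y hy =>
      obtain ⟨m, pw, hx⟩ := hx
      obtain ⟨m', pw', hy⟩ := hy
      exact Submodule.subset_span ⟨m + m', pw + pw', W_mul U hx hy⟩
    | zero => rw [mul_zero]; exact zero_mem _
    | add y z hy hz ihy ihz => rw [mul_add]; exact add_mem ihy ihz
    | smul c y hy ihy => rw [mul_smul_comm]; exact Submodule.smul_mem _ _ ihy
  | zero => rw [zero_mul]; exact zero_mem _
  | add y z hy hz ihy ihz => rw [add_mul]; exact add_mem ihy ihz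
  | smul c y hy ihy => rw [smul_mul_assoc]; exact Submodule.smul_mem _ _ ihy

/-- The span of monomials as a subalgebra. -/
def VA : Subalgebra k U.A :=
  Submodule.toSubalgebra (VV U) (VV_one U) (fun _ _ ha hb => VV_mul U ha hb)

lemma Uq_le_VV : ∀ a ∈ Uq, a ∈ VV U := by
  intro a ha
  have : UqInt k n p U.toUqAlg ≤ VA U := by
    rw [UqInt]
    apply Algebra.adjoin_le
    rintro a (((((⟨i, hi, rfl⟩ | ⟨s, hs, rfl⟩) | ⟨s, hs, rfl⟩) | ⟨i, hi, rfl⟩) | ⟨i, hi, rfl⟩) | ha)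
    · -- E i
      have hw := W.ext (W_one U) (Or.inl ⟨i, hi, rfl, rfl⟩) (one_mem (Grp U))
      rw [one_mul, mul_one, zero_add] at hw
      exact Submodule.subset_span ⟨1, _, hw⟩
    · -- L s
      exact Submodule.subset_span ⟨0, 0, W.grp (Submonoid.subset_closure ⟨s, hs, Or.inl rfl⟩)⟩
    · -- Linv s
      exact Submodule.subset_span ⟨0, 0, W.grp (Submonoid.subset_closure ⟨s, hs, Or.inr rfl⟩)⟩
    · -- Theta i
      have hw := W.ext (W_one U) (Or.inr (Or.inr ⟨i, hi, rfl, rfl⟩)) (one_mem (Grp U))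
      rw [one_mul, mul_one, zero_add] at hw
      exact Submodule.subset_span ⟨1, _, hw⟩
    · -- F i
      have hw := W.ext (W_one U) (Or.inr (Or.inl ⟨i, hi, rfl, rfl⟩)) (one_mem (Grp U))
      rw [one_mul, mul_one, zero_add] at hw
      exact Submodule.subset_span ⟨1, _, hw⟩
    · -- the scalars q, q⁻¹
      rcases ha with h | h <;> rw [h]
      · rw [Algebra.algebraMap_eq_smul_one]
        have hw' := W.scal (U := U) 1 (W_one U)
        rw [zpow_one] at hw'
        exact Submodule.subset_span ⟨0, 0, hw'⟩
      · have hw' := W.scal (U := U) (-1) (W_one U)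
        rw [zpow_neg_one] at hw'
        rw [Set.mem_singleton_iff] at *
        rw [Algebra.algebraMap_eq_smul_one]
        exact Submodule.subset_span ⟨0, 0, hw'⟩
  exact this ha

/-- The subgroup of `A ⊗ A` generated by tensors with both legs integral. -/
def DF : AddSubgroup (U.A ⊗[Kq k] U.A) :=
  AddSubgroup.closure {t | ∃ b c, b ∈ Uq ∧ c ∈ Uq ∧ t = b ⊗ₜ[Kq k] c}

lemma DF_smul_mem {c : Kq k} (hc : ∀ {a : U.A}, a ∈ Uq → c • a ∈ Uq)
    {t : U.A ⊗[Kq k] U.A} (ht : t ∈ DF U) : c • t ∈ DF U := by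
  induction ht using AddSubgroup.closure_induction with
  | mem t' ht' =>
    obtain ⟨b, c', hbU, hcU, rfl⟩ := ht'
    rw [← TensorProduct.tmul_smul]
    exact AddSubgroup.subset_closure ⟨b, c • c', hbU, hc hcU, rfl⟩
  | zero => rw [smul_zero]; exact zero_mem _
  | add a b ha hb iha ihb => rw [smul_add]; exact add_mem iha ihb
  | neg a ha iha => rw [smul_neg]; exact neg_mem iha

lemma DD_le_DF (m : ℕ) : DD U m ≤ DF U := by
  rw [DD]
  apply AddSubgroup.closure_le _ |>.mpr
  rintro t ⟨r, hr, b, pb, c, pc, hbW, hcU, hcg, rfl⟩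
  exact AddSubgroup.subset_closure ⟨b, c, (lemA U hbW).1, hcU, rfl⟩

lemma cop_mem_DF {a : U.A} (ha : a ∈ Uq) : U.cop a ∈ DF U := by
  have haV := Uq_le_VV U a ha
  clear ha
  induction haV using Submodule.span_induction with
  | mem w hw =>
    obtain ⟨m, pw, hw⟩ := hw
    obtain ⟨hwU, hwg, hwcou, γ, ⟨hγU, hγg, -⟩, hR⟩ := lemA U hw
    have h1 : U.cop w = w ⊗ₜ[Kq k] γ + (U.cop w - w ⊗ₜ[Kq k] γ) := by abel
    rw [h1]
    exact add_mem (AddSubgroup.subset_closure ⟨w, γ, hwU, hγU, rfl⟩)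
      (DD_le_DF U m hR)
  | zero => rw [map_zero]; exact zero_mem _
  | add y z hy hz ihy ihz => rw [map_add]; exact add_mem ihy ihz
  | smul c y hy ihy =>
    have h2 : c • y = (algebraMap k (Kq k) c) • y := (algebraMap_smul (Kq k) c y).symm
    rw [h2, LinearMap.map_smul]
    refine DF_smul_mem U (fun {a} haU => ?_) ihy
    rw [algebraMap_smul]
    exact Subalgebra.smul_mem _ haU c

lemma ant_mem_Uq {a : U.A} (ha : a ∈ Uq) : U.ant a ∈ Uq := by
  have haV := Uq_le_VV U a ha
  clear ha
  induction haV using Submodule.span_induction with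
  | mem w hw => obtain ⟨m, pw, hw⟩ := hw; exact lemB U m hw
  | zero => rw [map_zero]; exact zero_mem _
  | add y z hy hz ihy ihz => rw [map_add]; exact add_mem ihy ihz
  | smul c y hy ihy =>
    have h2 : c • y = (algebraMap k (Kq k) c) • y := (algebraMap_smul (Kq k) c y).symm
    rw [h2, LinearMap.map_smul, algebraMap_smul]
    exact Subalgebra.smul_mem _ ihy c

lemma cou_mem_LkAdj {a : U.A} (ha : a ∈ Uq) : U.cou a ∈ LkAdj k := by
  have haV := Uq_le_VV U a ha
  clear ha
  induction haV using Submodule.span_induction with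
  | mem w hw => obtain ⟨m, pw, hw⟩ := hw; exact (lemA U hw).2.2.1
  | zero => rw [map_zero]; exact zero_mem _
  | add y z hy hz ihy ihz => rw [map_add]; exact add_mem ihy ihz
  | smul c y hy ihy =>
    have h2 : c • y = (algebraMap k (Kq k) c) • y := (algebraMap_smul (Kq k) c y).symm
    rw [h2, LinearMap.map_smul, smul_eq_mul]
    exact mul_mem (Subalgebra.algebraMap_mem _ c) ihy

lemma DF_rep {t : U.A ⊗[Kq k] U.A} (ht : t ∈ DF U) :
    ∃ (ι : Type) (s : Finset ι) (b c : ι → U.A),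
      (∀ i ∈ s, b i ∈ Uq ∧ c i ∈ Uq) ∧ t = ∑ i ∈ s, b i ⊗ₜ[Kq k] c i := by
  induction ht using AddSubgroup.closure_induction with
  | mem t' ht' =>
    obtain ⟨b, c, hbU, hcU, rfl⟩ := ht'
    exact ⟨PUnit, {PUnit.unit}, fun _ => b, fun _ => c,
      fun _ _ => ⟨hbU, hcU⟩, by simp⟩
  | zero =>
    exact ⟨PUnit, ∅, fun _ => 0, fun _ => 0, by simp, by simp⟩
  | add a b ha hb iha ihb =>
    obtain ⟨ι₁, s₁, b₁, c₁, h₁, rfl⟩ := iha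
    obtain ⟨ι₂, s₂, b₂, c₂, h₂, rfl⟩ := ihb
    refine ⟨ι₁ ⊕ ι₂, s₁.disjSum s₂, Sum.elim b₁ b₂, Sum.elim c₁ c₂, ?_, ?_⟩
    · rintro (i | i) hi
      · exact h₁ i (by simpa using (Finset.mem_disjSum.mp hi))
      · exact h₂ i (by simpa using (Finset.mem_disjSum.mp hi))
    · rw [Finset.sum_disjSum]
      simp
  | neg a ha iha =>
    obtain ⟨ι, s, b, c, h, rfl⟩ := iha
    refine ⟨ι, s, b, fun i => -(c i), fun i hi => ⟨(h i hi).1, neg_mem (h i hi).2⟩, ?_⟩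
    rw [← Finset.sum_neg_distrib]
    congr 1
    funext i
    rw [TensorProduct.tmul_neg]

end Aux6
/-- Proposition 4.4.  The integral form `U_q^int(gl_n^p)`
— the `k[q,q⁻¹]`-subsuperalgebra of `U_q(gl_n^p)` generated by the
`E_i, L_k^{±1}, Θ_i, F_i` — is a Hopf subsuperalgebra over `k[q,q⁻¹]` of the
Hopf `k(q)`-superalgebra `U_q(gl_n^p)`:  it is closed under the antipode, its
counit takes values in `k[q,q⁻¹]`, and its coproduct takes values in
`U_q^int ⊗ U_q^int`. -/
theorem statement14 (k : Type) [Field k] [CharZero k] (n : ℕ) (hn : 2 ≤ n)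
    (p : ℕ → ZMod 2) (U : UqHopf k n p) :
    -- closed under the antipode:
    (∀ a ∈ UqInt k n p U.toUqAlg, U.ant a ∈ UqInt k n p U.toUqAlg) ∧
    -- the counit takes values in `k[q,q⁻¹] ⊆ k(q)`:
    (∀ a ∈ UqInt k n p U.toUqAlg,
      U.cou a ∈ Algebra.adjoin k ({RatFunc.X, (RatFunc.X)⁻¹} : Set (Kq k))) ∧
    -- the coproduct takes values in `U_q^int ⊗ U_q^int`:
    (∀ a ∈ UqInt k n p U.toUqAlg,
      ∃ (ι : Type) (s : Finset ι) (b c : ι → U.A),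
        (∀ i ∈ s, b i ∈ UqInt k n p U.toUqAlg ∧ c i ∈ UqInt k n p U.toUqAlg) ∧
        U.cop a = ∑ i ∈ s, b i ⊗ₜ[Kq k] c i) := by
  exact ⟨fun a ha => ant_mem_Uq U ha, fun a ha => cou_mem_LkAdj U ha,
    fun a ha => DF_rep U (cop_mem_DF U ha)⟩

end QGLS
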